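/- arXiv:1505.02086 — 5 statements merged into one kernel-verified Lean document; each statement's English description precedes it below -/
import Mathlib

section
/- Fix c > 0 and 0 < p_0 < p_1 < 1. For each n and each p ∈ [p_0, p_1], let A_n be the adjacency matrix of a random graph following G(n, p/n) and K_n = D_n^{-1} A_n with D_n the diagonal matrix with diagonal c·1_n + A_n·1_n. Then inf over p ∈ [p_0, p_1] of P_p{ sr(K_n) ≤ 1/√(1+c) } tends to 1 as n → ∞, where P_p denotes probability under G(n, p/n). -/
open MeasureTheory Filter

noncomputable section

/-- The Bernoulli measure on `Bool` putting mass `a` on `true`. -/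
def bernoulliMeasure (a : ℝ) : Measure Bool :=
  (ENNReal.ofReal a) • Measure.dirac true + (ENNReal.ofReal (1 - a)) • Measure.dirac false

instance (a : ℝ) : IsFiniteMeasure (bernoulliMeasure a) := by
  constructor
  simp only [bernoulliMeasure, Measure.coe_add, Measure.coe_smul, Pi.add_apply, Pi.smul_apply,
    smul_eq_mul, measure_univ, mul_one]
  exact ENNReal.add_lt_top.2 ⟨ENNReal.ofReal_lt_top, ENNReal.ofReal_lt_top⟩

/-- The sample space for an Erdős–Rényi random graph on `Fin n`: one Boolean
(edge indicator) for every unordered pair `i < j`. -/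
abbrev EdgeSpace (n : ℕ) : Type := {e : Fin n × Fin n // e.1 < e.2} → Bool

/-- The Erdős–Rényi model `G(n, a)`: the edge indicators are i.i.d. Bernoulli(a). -/
def erMeasure (n : ℕ) (a : ℝ) : Measure (EdgeSpace n) :=
  Measure.pi fun _ => bernoulliMeasure a

/-- The (random, symmetric, zero-diagonal, 0-1) adjacency matrix of the graph. -/
def adjMatrix {n : ℕ} (ω : EdgeSpace n) : Matrix (Fin n) (Fin n) ℝ :=
  Matrix.of fun i j =>
    if h : i < j then (if ω ⟨(i, j), h⟩ then 1 else 0)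
    else if h' : j < i then (if ω ⟨(j, i), h'⟩ then 1 else 0) else 0

/-- `K = D⁻¹ A`, the row-normalization of `A` by `D = diag(c·1 + A·1)`. -/
def Kmat {n : ℕ} (c : ℝ) (A : Matrix (Fin n) (Fin n) ℝ) : Matrix (Fin n) (Fin n) ℝ :=
  Matrix.of fun i j => A i j / (c + ∑ l, A i l)

/-- `M = D⁻¹ (cJ + A)`, the row-normalization of `cJ + A`. -/
def Mmat {n : ℕ} (c : ℝ) (A : Matrix (Fin n) (Fin n) ℝ) : Matrix (Fin n) (Fin n) ℝ :=
  Matrix.of fun i j => (c / n + A i j) / (c + ∑ l, A i l)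

/-- The spectral radius of a real matrix: the largest modulus of a (complex) eigenvalue. -/
def sr {n : ℕ} (A : Matrix (Fin n) (Fin n) ℝ) : ℝ :=
  sSup ((fun z : ℂ => ‖z‖) '' spectrum ℂ (A.map Complex.ofReal))

end


namespace ERaux

open Matrix
open scoped ENNReal Classical

variable {n : ℕ}

variable {n : ℕ}

abbrev EIdx (n : ℕ) := {e : Fin n × Fin n // e.1 < e.2}

def ends (e : EIdx n) : Finset (Fin n) := {e.1.1, e.1.2}

lemma ends_injective : Function.Injective (ends (n := n)) := by
  rintro ⟨⟨a, b⟩, hab⟩ ⟨⟨a', b'⟩, hab'⟩ h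
  simp only [ends, Finset.ext_iff, Finset.mem_insert, Finset.mem_singleton] at h
  have h1 := (h a).1 (Or.inl rfl)
  have h2 := (h b).1 (Or.inr rfl)
  have h3 := (h a').2 (Or.inl rfl)
  simp only at h1 h2 h3 hab hab'
  have hab2 : (a : ℕ) < b := hab
  have hab2' : (a' : ℕ) < b' := hab'
  have v1 : (a : ℕ) = a' ∨ (a : ℕ) = b' := by
    rcases h1 with h | h
    · exact Or.inl (congrArg Fin.val h)
    · exact Or.inr (congrArg Fin.val h)
  have v2 : (b : ℕ) = a' ∨ (b : ℕ) = b' := by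
    rcases h2 with h | h
    · exact Or.inl (congrArg Fin.val h)
    · exact Or.inr (congrArg Fin.val h)
  have v3 : (a' : ℕ) = a ∨ (a' : ℕ) = b := by
    rcases h3 with h | h
    · exact Or.inl (congrArg Fin.val h)
    · exact Or.inr (congrArg Fin.val h)
  have ha : (a : ℕ) = a' := by omega
  have hb : (b : ℕ) = b' := by omega
  exact Subtype.ext (by rw [Prod.mk.injEq]; exact ⟨Fin.ext ha, Fin.ext hb⟩)

def AdjF (F : Finset (EIdx n)) (x y : Fin n) : Prop :=
  ∃ e ∈ F, (e.1.1 = x ∧ e.1.2 = y) ∨ (e.1.1 = y ∧ e.1.2 = x)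

lemma AdjF.symm {F : Finset (EIdx n)} {x y : Fin n} (h : AdjF F x y) : AdjF F y x := by
  obtain ⟨e, he, h⟩ := h; exact ⟨e, he, h.symm⟩

lemma AdjF.ne {F : Finset (EIdx n)} {x y : Fin n} (h : AdjF F x y) : x ≠ y := by
  obtain ⟨e, _, h⟩ := h
  have h2 : e.1.1 ≠ e.1.2 := ne_of_lt e.2
  rcases h with ⟨ha, hb⟩ | ⟨ha, hb⟩
  · subst ha; subst hb; exact h2
  · subst ha; subst hb; exact h2.symm

lemma AdjF.mono {F F' : Finset (EIdx n)} (hFF : F ⊆ F') {x y : Fin n} (h : AdjF F x y) :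
    AdjF F' x y := by obtain ⟨e, he, h⟩ := h; exact ⟨e, hFF he, h⟩

lemma adjF_mem_ends {F : Finset (EIdx n)} {x y : Fin n} (h : AdjF F x y) :
    ∃ e ∈ F, ends e = {x, y} := by
  obtain ⟨e, he, h⟩ := h
  refine ⟨e, he, ?_⟩
  unfold ends
  rcases h with ⟨h1, h2⟩ | ⟨h1, h2⟩
  · rw [h1, h2]
  · rw [h1, h2, Finset.pair_comm]

lemma adjF_of_mem_ends {F : Finset (EIdx n)} {e : EIdx n} (he : e ∈ F) {x y : Fin n}
    (h : ends e = {x, y}) (hxy : x ≠ y) : AdjF F x y := by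
  unfold ends at h
  have hx : x ∈ ({e.1.1, e.1.2} : Finset (Fin n)) := by rw [h]; simp
  have hy : y ∈ ({e.1.1, e.1.2} : Finset (Fin n)) := by rw [h]; simp
  simp only [Finset.mem_insert, Finset.mem_singleton] at hx hy
  refine ⟨e, he, ?_⟩
  rcases hx with hx | hx <;> rcases hy with hy | hy
  · exact absurd (hx.trans hy.symm) hxy
  · exact Or.inl ⟨hx.symm, hy.symm⟩
  · exact Or.inr ⟨hy.symm, hx.symm⟩
  · exact absurd (hx.trans hy.symm) hxy

/-- A path of length `k` in the edge set `F`. -/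
def PathOf (F : Finset (EIdx n)) (k : ℕ) (v : ℕ → Fin n) : Prop :=
  (∀ i j, i < k → j < k → v i = v j → i = j) ∧ (∀ i, i + 1 < k → AdjF F (v i) (v (i + 1)))

/-- The "bad structure": a path with chords at both endpoints giving `k+1` distinct edges. -/
def BadE (F : Finset (EIdx n)) : Prop :=
  ∃ k a b, ∃ v : ℕ → Fin n, PathOf F k v ∧ 2 ≤ a ∧ a < k ∧ b + 3 ≤ k ∧
    ¬(a = k - 1 ∧ b = 0) ∧ AdjF F (v 0) (v a) ∧ AdjF F (v (k - 1)) (v b)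

lemma BadE.mono {F F' : Finset (EIdx n)} (hFF : F ⊆ F') (h : BadE F) : BadE F' := by
  obtain ⟨k, a, b, v, ⟨hinj, hadj⟩, h2, h3, h4, h5, h6, h7⟩ := h
  exact ⟨k, a, b, v, ⟨hinj, fun i hi => (hadj i hi).mono hFF⟩, h2, h3, h4, h5,
    h6.mono hFF, h7.mono hFF⟩

section LP
variable {F : Finset (EIdx n)} {k : ℕ} {v : ℕ → Fin n}

lemma pathOf_le (h : PathOf F k v) : k ≤ n := by
  have hinj : Function.Injective (fun i : Fin k => v i) := by
    intro i j hij
    exact Fin.ext (h.1 i j i.2 j.2 hij)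
  simpa using Fintype.card_le_of_injective _ hinj

lemma path_reverse (h : PathOf F k v) : PathOf F k (fun i => v (k - 1 - i)) := by
  constructor
  · intro i j hi hj hv
    have := h.1 _ _ (by omega) (by omega) hv
    omega
  · intro i hi
    have := h.2 (k - 1 - (i+1)) (by omega)
    have heq : k - 1 - (i+1) + 1 = k - 1 - i := by omega
    rw [heq] at this
    exact this.symm

lemma exists_longest (hF : F.Nonempty) :
    ∃ k v, 2 ≤ k ∧ PathOf F k v ∧ ∀ k' v', PathOf F k' v' → k' ≤ k := by
  classical
  obtain ⟨e, he⟩ := hF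
  set P : ℕ → Prop := fun m => ∃ v : ℕ → Fin n, PathOf F m v with hP
  have hn2 : 2 ≤ n := by
    have h1 : (e.1.1 : ℕ) < e.1.2 := e.2
    have h2 : (e.1.2 : ℕ) < n := e.1.2.2
    omega
  have hP2 : P 2 := by
    refine ⟨fun i => if i = 0 then e.1.1 else e.1.2, ?_, ?_⟩
    · intro i j hi hj hv
      have hne : e.1.1 ≠ e.1.2 := ne_of_lt e.2
      by_cases hi0 : i = 0 <;> by_cases hj0 : j = 0
      · omega
      · exfalso; have hj1 : j = 1 := by omega
        rw [hi0, hj1] at hv; simp only [if_pos rfl, if_neg one_ne_zero] at hv; exact hne hv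
      · exfalso; have hi1 : i = 1 := by omega
        rw [hi1, hj0] at hv; simp only [if_pos rfl, if_neg one_ne_zero] at hv; exact hne hv.symm
      · omega
    · intro i hi
      have hi0 : i = 0 := by omega
      subst hi0
      simp only [if_pos rfl, if_neg one_ne_zero]
      exact ⟨e, he, Or.inl ⟨rfl, rfl⟩⟩
  have hPk : P (Nat.findGreatest P n) := Nat.findGreatest_spec hn2 hP2
  have hk2 : 2 ≤ Nat.findGreatest P n := Nat.le_findGreatest hn2 hP2
  obtain ⟨v, hv⟩ := hPk
  refine ⟨Nat.findGreatest P n, v, hk2, hv, ?_⟩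
  intro k' v' hv'
  by_contra hlt
  push_neg at hlt
  exact Nat.findGreatest_is_greatest (P := P) hlt (pathOf_le hv') ⟨v', hv'⟩

lemma no_new_front (hmax : ∀ k' v', PathOf F k' v' → k' ≤ k) (h : PathOf F k v)
    {w : Fin n} (hw : AdjF F w (v 0)) : ∃ i, i < k ∧ w = v i := by
  by_contra hcon
  push_neg at hcon
  have : PathOf F (k + 1) (fun i => if i = 0 then w else v (i - 1)) := by
    constructor
    · intro i j hi hj hv
      by_cases hi0 : i = 0 <;> by_cases hj0 : j = 0 <;> simp [hi0, hj0] at hv ⊢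
      · exact absurd hv (hcon (j-1) (by omega))
      · exact absurd hv.symm (hcon (i-1) (by omega))
      · have := h.1 _ _ (by omega : i - 1 < k) (by omega : j - 1 < k) hv
        omega
    · intro i hi
      by_cases hi0 : i = 0
      · subst hi0; simpa using hw
      · have := h.2 (i - 1) (by omega)
        have h1 : i - 1 + 1 = i := by omega
        rw [h1] at this
        simpa [hi0] using this
  have := hmax _ _ this
  omega

lemma no_new_back (hmax : ∀ k' v', PathOf F k' v' → k' ≤ k) (h : PathOf F k v)
    {w : Fin n} (hw : AdjF F w (v (k - 1))) : ∃ i, i < k ∧ w = v i := by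
  have hrev := path_reverse h
  obtain ⟨i, hik, hwi⟩ := no_new_front hmax hrev (by simpa using hw)
  exact ⟨k - 1 - i, by omega, hwi⟩

lemma cyc_adj (h : PathOf F k v) (hclose : AdjF F (v 0) (v (k - 1))) (hk2 : 2 ≤ k) :
    ∀ m, m + 1 ≤ k → AdjF F (v m) (v (if m + 1 < k then m + 1 else 0)) := by
  intro m hm
  by_cases h1 : m + 1 < k
  · simpa [h1] using h.2 m h1
  · have hm1 : m = k - 1 := by omega
    simp only [if_neg h1]
    rw [hm1]
    exact hclose.symm

lemma rotate_path (h : PathOf F k v) (hclose : AdjF F (v 0) (v (k - 1))) (hk2 : 2 ≤ k)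
    {s : ℕ} (hs : s < k) : PathOf F k (fun t => if t + s < k then v (t + s) else v (t + s - k)) := by
  constructor
  · intro i j hi hj hv
    by_cases h1 : i + s < k <;> by_cases h2 : j + s < k <;> simp only [h1, h2, if_pos, if_neg,
      if_true, if_false] at hv
    · have := h.1 _ _ h1 h2 hv; omega
    · have := h.1 _ _ h1 (by omega : j + s - k < k) hv; omega
    · have := h.1 _ _ (by omega : i + s - k < k) h2 hv; omega
    · have := h.1 _ _ (by omega : i + s - k < k) (by omega : j + s - k < k) hv; omega
  · intro t ht
    by_cases h1 : t + s + 1 < k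
    · have := h.2 (t + s) h1
      simp only [if_pos (by omega : t + s < k), if_pos (by omega : t + 1 + s < k)]
      have he : t + 1 + s = t + s + 1 := by omega
      rw [he]
      exact this
    · by_cases h2 : t + s + 1 = k
      · simp only [if_pos (by omega : t + s < k), if_neg (by omega : ¬ t + 1 + s < k)]
        have he1 : t + s = k - 1 := by omega
        have he2 : t + 1 + s - k = 0 := by omega
        rw [he1, he2]
        exact hclose.symm
      · have h3 : ¬ t + s < k := by omega
        have h4 : ¬ t + 1 + s < k := by omega
        simp only [if_neg h3, if_neg h4]
        have := h.2 (t + s - k) (by omega)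
        have he : t + s - k + 1 = t + 1 + s - k := by omega
        rw [he] at this
        exact this

lemma no_new_cycle (hmax : ∀ k' v', PathOf F k' v' → k' ≤ k) (h : PathOf F k v)
    (hclose : AdjF F (v 0) (v (k - 1))) (hk2 : 2 ≤ k)
    {w : Fin n} (hw : ∀ i, i < k → w ≠ v i) {i₀ : ℕ} (hi₀ : i₀ < k) :
    ¬ AdjF F w (v i₀) := by
  intro hadj
  by_cases hs : i₀ + 1 < k
  · -- rotate by s = i₀ + 1 puts v i₀ at the back
    have hrot := rotate_path h hclose hk2 (s := i₀ + 1) hs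
    have hback : (if k - 1 + (i₀+1) < k then v (k - 1 + (i₀+1)) else v (k - 1 + (i₀+1) - k))
        = v i₀ := by
      rw [if_neg (by omega : ¬ k - 1 + (i₀+1) < k)]
      congr 1
      omega
    obtain ⟨i, hik, hwi⟩ := no_new_back hmax hrot (by rw [hback]; exact hadj)
    by_cases h1 : i + (i₀+1) < k
    · rw [if_pos h1] at hwi; exact hw _ h1 hwi
    · rw [if_neg h1] at hwi; exact hw _ (by omega) hwi
  · -- i₀ = k - 1
    have hi : i₀ = k - 1 := by omega
    obtain ⟨i, hik, hwi⟩ := no_new_back hmax h (by rw [← hi]; exact hadj)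
    exact hw _ hik hwi

end LP

lemma other_end {F : Finset (EIdx n)} {e : EIdx n} (he : e ∈ F) {x : Fin n} (hx : x ∈ ends e) :
    ∃ w, w ≠ x ∧ ends e = {x, w} ∧ AdjF F x w := by
  unfold ends at hx ⊢
  simp only [Finset.mem_insert, Finset.mem_singleton] at hx
  rcases hx with hx | hx
  · exact ⟨e.1.2, by rw [hx]; exact (ne_of_lt e.2).symm, by rw [hx],
      ⟨e, he, Or.inl ⟨hx.symm, rfl⟩⟩⟩
  · exact ⟨e.1.1, by rw [hx]; exact ne_of_lt e.2, by rw [hx, Finset.pair_comm],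
      ⟨e, he, Or.inr ⟨rfl, hx.symm⟩⟩⟩

lemma L3b : ∀ F : Finset (EIdx n), (F.biUnion ends).card < F.card → BadE F := by
  intro F
  induction F using Finset.strongInduction with
  | _ F IH =>
  intro hV
  rcases F.eq_empty_or_nonempty with hFe | hFne
  · subst hFe; simp at hV
  by_cases hA : ∃ e ∈ F, ∃ x ∈ ends e, ∀ e' ∈ F, x ∈ ends e' → e' = e
  · -- a vertex of degree one: erase its edge and induct
    obtain ⟨e, he, x, hx, huniq⟩ := hA
    have hxV : x ∈ F.biUnion ends := Finset.mem_biUnion.2 ⟨e, he, hx⟩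
    have hsub : (F.erase e).biUnion ends ⊆ (F.biUnion ends).erase x := by
      intro w hw
      obtain ⟨e', he', hwe'⟩ := Finset.mem_biUnion.1 hw
      have he'F : e' ∈ F := Finset.mem_of_mem_erase he'
      refine Finset.mem_erase.2 ⟨?_, Finset.mem_biUnion.2 ⟨e', he'F, hwe'⟩⟩
      intro hwx
      exact (Finset.ne_of_mem_erase he') (huniq e' he'F (hwx ▸ hwe'))
    have hcard1 : ((F.erase e).biUnion ends).card ≤ (F.biUnion ends).card - 1 := by
      have := Finset.card_le_card hsub
      rwa [Finset.card_erase_of_mem hxV] at this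
    have hcard2 : (F.erase e).card = F.card - 1 := Finset.card_erase_of_mem he
    have hvi : ((F.erase e).biUnion ends).card < (F.erase e).card := by
      have h1 : 1 ≤ (F.biUnion ends).card := Finset.card_pos.2 ⟨x, hxV⟩
      have h2 : 1 ≤ F.card := Finset.card_pos.2 ⟨e, he⟩
      omega
    exact (IH _ (Finset.erase_ssubset he) hvi).mono (Finset.erase_subset e F)
  · push_neg at hA
    -- every vertex of every edge lies on a second edge
    obtain ⟨k, v, hk2, hpath, hmax⟩ := exists_longest hFne
    have h01 : AdjF F (v 0) (v 1) := hpath.2 0 (by omega)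
    obtain ⟨e₁, he₁, hends₁⟩ := adjF_mem_ends h01
    have hv0e₁ : v 0 ∈ ends e₁ := by rw [hends₁]; simp
    -- chord at the front
    obtain ⟨e', he', hv0e', hne'⟩ := hA e₁ he₁ (v 0) hv0e₁
    obtain ⟨w, hwne, hwends, hwadj⟩ := other_end he' hv0e'
    have hwv1 : w ≠ v 1 := by
      intro hw1
      exact hne' (ends_injective (hwends.trans (hw1 ▸ hends₁.symm)))
    obtain ⟨a, hak, hwa⟩ := no_new_front hmax hpath hwadj.symm
    have ha0 : a ≠ 0 := by
      intro h0; exact hwne (hwa.trans (h0 ▸ rfl))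
    have ha1 : a ≠ 1 := by
      intro h1; exact hwv1 (hwa.trans (h1 ▸ rfl))
    have hchord1 : AdjF F (v 0) (v a) := hwa ▸ hwadj
    -- chord at the back
    have hlast : AdjF F (v (k - 1)) (v (k - 2)) := by
      have := hpath.2 (k - 2) (by omega)
      have he : k - 2 + 1 = k - 1 := by omega
      rw [he] at this
      exact this.symm
    obtain ⟨e₂, he₂, hends₂⟩ := adjF_mem_ends hlast
    have hvke₂ : v (k - 1) ∈ ends e₂ := by rw [hends₂]; simp
    obtain ⟨e'', he'', hvke'', hne''⟩ := hA e₂ he₂ (v (k - 1)) hvke₂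
    obtain ⟨w', hwne', hwends', hwadj'⟩ := other_end he'' hvke''
    have hwvk2 : w' ≠ v (k - 2) := by
      intro hw2
      exact hne'' (ends_injective (hwends'.trans (hw2 ▸ hends₂.symm)))
    obtain ⟨b, hbk, hwb⟩ := no_new_back hmax hpath hwadj'.symm
    have hbk1 : b ≠ k - 1 := by
      intro h0; exact hwne' (hwb.trans (h0 ▸ rfl))
    have hbk2 : b ≠ k - 2 := by
      intro h1; exact hwvk2 (hwb.trans (h1 ▸ rfl))
    have hchord2 : AdjF F (v (k - 1)) (v b) := hwb ▸ hwadj'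
    by_cases hab : ¬(a = k - 1 ∧ b = 0)
    · exact ⟨k, a, b, v, hpath, by omega, hak, by omega, hab, hchord1, hchord2⟩
    push_neg at hab
    have hclose : AdjF F (v 0) (v (k - 1)) := hab.1 ▸ hchord1
    -- cycle case
    set CV : Finset (Fin n) := (Finset.range k).image v with hCV
    set TouchF : Finset (EIdx n) := F.filter (fun e => e.1.1 ∈ CV ∨ e.1.2 ∈ CV) with hTF
    have hCVmem : ∀ i, i < k → v i ∈ CV := fun i hi =>
      Finset.mem_image.2 ⟨i, Finset.mem_range.2 hi, rfl⟩
    by_cases hB1 : ∃ e ∈ TouchF,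
        ¬ ∃ i, i + 1 ≤ k ∧ ends e = {v i, v (if i + 1 < k then i + 1 else 0)}
    · -- a touching non-rim edge gives a bad structure
      obtain ⟨e, heT, hnotrim⟩ := hB1
      obtain ⟨heF, htouch⟩ := Finset.mem_filter.1 heT
      have hxe : ∃ x ∈ ends e, x ∈ CV := by
        rcases htouch with h | h
        · exact ⟨e.1.1, by unfold ends; simp, h⟩
        · exact ⟨e.1.2, by unfold ends; simp, h⟩
      obtain ⟨x, hxends, hxCV⟩ := hxe
      obtain ⟨i, hirange, hxi⟩ := Finset.mem_image.1 hxCV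
      have hik : i < k := Finset.mem_range.1 hirange
      obtain ⟨y, hyne, hyends, hyadj⟩ := other_end heF hxends
      have hyl : ∃ j, j < k ∧ y = v j := by
        by_contra hy
        push_neg at hy
        exact no_new_cycle hmax hpath hclose hk2 hy hik
          (by rw [hxi]; exact hyadj.symm)
      obtain ⟨j, hjk, hyj⟩ := hyl
      have hji : j ≠ i := by
        intro hji'; rw [hji', hxi] at hyj; exact hyne hyj
      -- normalize so i' < j'
      have key : ∃ i' j', i' < j' ∧ j' < k ∧ ends e = {v i', v j'} := by
        rcases Nat.lt_or_ge i j with hij | hij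
        · exact ⟨i, j, hij, hjk, by rw [hyends, hxi, hyj]⟩
        · exact ⟨j, i, by omega, hik, by rw [hyends, hxi, hyj, Finset.pair_comm]⟩
      obtain ⟨i', j', hij', hj'k, hends⟩ := key
      have hnotcons : j' ≠ i' + 1 := by
        intro hcons
        exact hnotrim ⟨i', by omega, by rw [if_pos (by omega : i' + 1 < k), ← hcons]; exact hends⟩
      have hnotwrap : ¬(i' = 0 ∧ j' = k - 1) := by
        rintro ⟨h0, hk1⟩
        refine hnotrim ⟨k - 1, by omega, ?_⟩
        rw [if_neg (by omega : ¬ k - 1 + 1 < k)]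
        rw [hends, h0, hk1, Finset.pair_comm]
      have hij2 : i' + 2 ≤ j' := by omega
      have hk4 : 4 ≤ k := by omega
      have hvij : AdjF F (v i') (v j') := by
        refine adjF_of_mem_ends heF hends ?_
        intro hvv
        exact absurd (hpath.1 i' j' (by omega) hj'k hvv) (by omega)
      set wp : ℕ → Fin n := fun t => if t + (i' + 1) < k then v (t + (i' + 1))
        else v (t + (i' + 1) - k) with hwp
      have hrotp : PathOf F k wp := rotate_path hpath hclose hk2 (by omega)
      have hwp0 : wp 0 = v (i' + 1) := by
        rw [hwp]; simp only []; rw [if_pos (by omega : 0 + (i' + 1) < k)]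
        congr 1
        omega
      have hwpk : wp (k - 1) = v i' := by
        rw [hwp]; simp only []; rw [if_neg (by omega : ¬ k - 1 + (i' + 1) < k)]
        congr 1; omega
      have hwpj : wp (j' - i' - 1) = v j' := by
        rw [hwp]; simp only []; rw [if_pos (by omega : j' - i' - 1 + (i' + 1) < k)]
        congr 1; omega
      refine ⟨k, k - 1, j' - i' - 1, wp, hrotp, by omega, by omega, by omega, by omega, ?_, ?_⟩
      · rw [hwp0, hwpk]
        exact (hpath.2 i' (by omega)).symm
      · rw [hwpk, hwpj]
        exact hvij
    · -- all touching edges are rim edges: remove the cycle component and induct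
      push_neg at hB1
      have hTsub : TouchF ⊆ F := Finset.filter_subset _ _
      classical
      -- TouchF has at most k elements
      have hTcard : TouchF.card ≤ k := by
        have : TouchF.card ≤ (Finset.range k).card := by
          refine Finset.card_le_card_of_injOn
            (fun e => if h : ∃ i, i + 1 ≤ k ∧
              ends e = {v i, v (if i + 1 < k then i + 1 else 0)} then h.choose else 0) ?_ ?_
          · intro e heT
            have h := hB1 e heT
            show (if h : ∃ i, i + 1 ≤ k ∧
              ends e = {v i, v (if i + 1 < k then i + 1 else 0)} then h.choose else 0) ∈
              Finset.range k
            rw [dif_pos h]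
            exact Finset.mem_range.2 (by have := h.choose_spec.1; omega)
          · intro e heT e' heT' hfe
            have h := hB1 e (by exact_mod_cast heT)
            have h' := hB1 e' (by exact_mod_cast heT')
            have hfe2 : (if h : ∃ i, i + 1 ≤ k ∧
                ends e = {v i, v (if i + 1 < k then i + 1 else 0)} then h.choose else 0) =
                (if h : ∃ i, i + 1 ≤ k ∧
                ends e' = {v i, v (if i + 1 < k then i + 1 else 0)} then h.choose else 0) := hfe
            clear hfe
            rw [dif_pos h, dif_pos h'] at hfe2
            rename' hfe2 => hfe
            have hs := h.choose_spec.2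
            have hs' := h'.choose_spec.2
            rw [hfe] at hs
            exact ends_injective (hs.trans hs'.symm)
        simpa using this
      have hCVcard : CV.card = k := by
        rw [hCV, Finset.card_image_of_injOn, Finset.card_range]
        intro i hi j hj hv
        exact hpath.1 i j (Finset.mem_range.1 hi) (Finset.mem_range.1 hj) hv
      have hCVsub : CV ⊆ F.biUnion ends := by
        intro x hx
        obtain ⟨i, hirange, hxi⟩ := Finset.mem_image.1 hx
        have hik : i < k := Finset.mem_range.1 hirange
        by_cases h1 : i + 1 < k
        · obtain ⟨e, he, hends⟩ := adjF_mem_ends (hpath.2 i h1)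
          exact Finset.mem_biUnion.2 ⟨e, he, by rw [hends, ← hxi]; simp⟩
        · have hie : i = k - 1 := by omega
          obtain ⟨e, he, hends⟩ := adjF_mem_ends hclose
          refine Finset.mem_biUnion.2 ⟨e, he, ?_⟩
          rw [hends, ← hxi, hie]
          simp
      set F' : Finset (EIdx n) := F \ TouchF with hF'
      have hF'sub : F'.biUnion ends ⊆ (F.biUnion ends) \ CV := by
        intro x hx
        obtain ⟨e', he', hxe'⟩ := Finset.mem_biUnion.1 hx
        obtain ⟨he'F, he'T⟩ := Finset.mem_sdiff.1 he'
        refine Finset.mem_sdiff.2 ⟨Finset.mem_biUnion.2 ⟨e', he'F, hxe'⟩, ?_⟩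
        intro hxCV
        refine he'T (Finset.mem_filter.2 ⟨he'F, ?_⟩)
        unfold ends at hxe'
        simp only [Finset.mem_insert, Finset.mem_singleton] at hxe'
        rcases hxe' with h | h
        · exact Or.inl (h ▸ hxCV)
        · exact Or.inr (h ▸ hxCV)
      have he₁T : e₁ ∈ TouchF := by
        refine Finset.mem_filter.2 ⟨he₁, ?_⟩
        have h11 : e₁.1.1 ∈ ends e₁ := by unfold ends; simp
        rw [hends₁] at h11
        simp only [Finset.mem_insert, Finset.mem_singleton] at h11
        rcases h11 with h | h
        · exact Or.inl (h ▸ hCVmem 0 (by omega))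
        · exact Or.inl (h ▸ hCVmem 1 (by omega))
      have hF'ss : F' ⊂ F := by
        refine Finset.ssubset_iff_of_subset (Finset.sdiff_subset) |>.2 ⟨e₁, he₁, ?_⟩
        intro h
        exact (Finset.mem_sdiff.1 h).2 he₁T
      have hc1 : (F'.biUnion ends).card + k ≤ (F.biUnion ends).card := by
        have h1 := Finset.card_le_card hF'sub
        rw [Finset.card_sdiff_of_subset hCVsub, hCVcard] at h1
        have h2 := Finset.card_le_card hCVsub
        rw [hCVcard] at h2
        omega
      have hc2 : F'.card = F.card - TouchF.card := Finset.card_sdiff_of_subset hTsub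
      have hTF1 : 1 ≤ TouchF.card := Finset.card_pos.2 ⟨e₁, he₁T⟩
      have hTFle : TouchF.card ≤ F.card := Finset.card_le_card hTsub
      have hvi' : (F'.biUnion ends).card < F'.card := by omega
      exact (IH _ hF'ss hvi').mono (Finset.sdiff_subset)


lemma exists_injection {E : Finset (EIdx n)} (hE : ¬ BadE E) :
    ∃ g : EIdx n → Fin n, (∀ e ∈ E, g e = e.1.1 ∨ g e = e.1.2)
      ∧ Set.InjOn g ((E : Finset (EIdx n)) : Set (EIdx n)) := by
  classical
  have hall : ∀ s : Finset {x // x ∈ E}, s.card ≤ (s.biUnion (fun e => ends e.1)).card := by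
    intro s
    by_contra hcon
    push_neg at hcon
    have hcards : (s.image Subtype.val).card = s.card :=
      Finset.card_image_of_injective _ Subtype.val_injective
    have hbi : (s.image Subtype.val).biUnion ends = s.biUnion (fun e => ends e.1) :=
      Finset.image_biUnion
    have hbad : BadE (s.image Subtype.val) := L3b _ (by rw [hcards, hbi]; exact hcon)
    refine hE (hbad.mono ?_)
    intro x hx
    obtain ⟨y, _, rfl⟩ := Finset.mem_image.1 hx
    exact y.2
  obtain ⟨f, hfinj, hfmem⟩ := (Finset.all_card_le_biUnion_card_iff_exists_injective
    (fun e : {x // x ∈ E} => ends e.1)).1 hall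
  refine ⟨fun e => if h : e ∈ E then f ⟨e, h⟩ else e.1.1, ?_, ?_⟩
  · intro e he
    show (if h : e ∈ E then f ⟨e, h⟩ else e.1.1) = e.1.1 ∨
      (if h : e ∈ E then f ⟨e, h⟩ else e.1.1) = e.1.2
    rw [dif_pos he]
    have hm := hfmem ⟨e, he⟩
    unfold ends at hm
    simp only [Finset.mem_insert, Finset.mem_singleton] at hm
    exact hm
  · intro e he e' he' heq
    simp only [Finset.mem_coe] at he he'
    have heq2 : (if h : e ∈ E then f ⟨e, h⟩ else e.1.1)
        = (if h : e' ∈ E then f ⟨e', h⟩ else e'.1.1) := heq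
    clear heq
    rw [dif_pos he, dif_pos he'] at heq2
    rename' heq2 => heq
    exact congrArg Subtype.val (hfinj heq)


/-- The set of present edges. -/
def Epres (ω : EdgeSpace n) : Finset (EIdx n) := Finset.univ.filter (fun e => ω e = true)

lemma sum_ind (E' : Finset (Fin n × Fin n)) (G : Fin n × Fin n → ℝ) :
    ∑ i, ∑ j, (if (i, j) ∈ E' then G (i, j) else 0) = ∑ x ∈ E', G x := by
  classical
  rw [← Finset.sum_product']
  rw [Finset.univ_product_univ]
  rw [Finset.sum_ite_mem]
  rw [Finset.univ_inter]

lemma mem_image_Epres (ω : EdgeSpace n) (i j : Fin n) :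
    ((i, j) ∈ (Epres ω).image Subtype.val) ↔ ∃ h : i < j, ω ⟨(i, j), h⟩ = true := by
  constructor
  · rintro hm
    obtain ⟨e, he, hval⟩ := Finset.mem_image.1 hm
    have h2 := e.2
    rw [hval] at h2
    refine ⟨h2, ?_⟩
    have : e = ⟨(i, j), h2⟩ := Subtype.ext hval
    rw [this] at he
    exact (Finset.mem_filter.1 he).2
  · rintro ⟨h, hω⟩
    exact Finset.mem_image.2 ⟨⟨(i, j), h⟩, Finset.mem_filter.2 ⟨Finset.mem_univ _, hω⟩, rfl⟩

lemma adj_split (ω : EdgeSpace n) (i j : Fin n) :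
    adjMatrix ω i j = (if (i, j) ∈ (Epres ω).image Subtype.val then (1 : ℝ) else 0)
      + (if (j, i) ∈ (Epres ω).image Subtype.val then (1 : ℝ) else 0) := by
  classical
  rcases lt_trichotomy i j with hij | hij | hij
  · have h2 : ¬ ((j, i) ∈ (Epres ω).image Subtype.val) := by
      intro hm
      obtain ⟨h, _⟩ := (mem_image_Epres ω j i).1 hm
      exact absurd hij (lt_asymm h)
    rw [if_neg h2, add_zero]
    show (if h : i < j then (if ω ⟨(i, j), h⟩ then (1:ℝ) else 0)
      else if h' : j < i then (if ω ⟨(j, i), h'⟩ then 1 else 0) else 0) = _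
    rw [dif_pos hij]
    by_cases hω : ω ⟨(i, j), hij⟩ = true
    · rw [if_pos ((mem_image_Epres ω i j).2 ⟨hij, hω⟩)]
      simp [hω]
    · rw [if_neg (fun hm => hω ((mem_image_Epres ω i j).1 hm).2)]
      simp only [Bool.not_eq_true] at hω
      simp [hω]
  · subst hij
    have h2 : ¬ ((i, i) ∈ (Epres ω).image Subtype.val) := by
      intro hm
      obtain ⟨h, _⟩ := (mem_image_Epres ω i i).1 hm
      exact absurd h (lt_irrefl i)
    rw [if_neg h2, add_zero]
    show (if h : i < i then (if ω ⟨(i, i), h⟩ then (1:ℝ) else 0)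
      else if h' : i < i then (if ω ⟨(i, i), h'⟩ then 1 else 0) else 0) = _
    rw [dif_neg (lt_irrefl i), dif_neg (lt_irrefl i)]
  · have h2 : ¬ ((i, j) ∈ (Epres ω).image Subtype.val) := by
      intro hm
      obtain ⟨h, _⟩ := (mem_image_Epres ω i j).1 hm
      exact absurd hij (lt_asymm h)
    rw [if_neg h2, zero_add]
    show (if h : i < j then (if ω ⟨(i, j), h⟩ then (1:ℝ) else 0)
      else if h' : j < i then (if ω ⟨(j, i), h'⟩ then 1 else 0) else 0) = _
    rw [dif_neg (lt_asymm hij), dif_pos hij]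
    by_cases hω : ω ⟨(j, i), hij⟩ = true
    · rw [if_pos ((mem_image_Epres ω j i).2 ⟨hij, hω⟩)]
      simp [hω]
    · rw [if_neg (fun hm => hω ((mem_image_Epres ω j i).1 hm).2)]
      simp only [Bool.not_eq_true] at hω
      simp [hω]

lemma sum_conv (ω : EdgeSpace n) (Fn : Fin n → Fin n → ℝ) :
    ∑ i, ∑ j, adjMatrix ω i j * Fn i j
      = ∑ e ∈ Epres ω, (Fn e.1.1 e.1.2 + Fn e.1.2 e.1.1) := by
  classical
  have hsplit : ∀ i j, adjMatrix ω i j * Fn i j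
      = (if (i, j) ∈ (Epres ω).image Subtype.val then Fn i j else 0)
        + (if (j, i) ∈ (Epres ω).image Subtype.val then Fn i j else 0) := by
    intro i j
    rw [adj_split]
    by_cases h1 : (i, j) ∈ (Epres ω).image Subtype.val <;>
      by_cases h2 : (j, i) ∈ (Epres ω).image Subtype.val
    · exfalso
      obtain ⟨ha, -⟩ := (mem_image_Epres ω i j).1 h1
      obtain ⟨hb, -⟩ := (mem_image_Epres ω j i).1 h2
      exact absurd ha (lt_asymm hb)
    all_goals simp [h1, h2]
  calc ∑ i, ∑ j, adjMatrix ω i j * Fn i j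
      = ∑ i, ∑ j, ((if (i, j) ∈ (Epres ω).image Subtype.val then Fn i j else 0)
        + (if (j, i) ∈ (Epres ω).image Subtype.val then Fn i j else 0)) := by
        refine Finset.sum_congr rfl fun i _ => Finset.sum_congr rfl fun j _ => hsplit i j
    _ = (∑ i, ∑ j, (if (i, j) ∈ (Epres ω).image Subtype.val then Fn i j else 0))
        + ∑ i, ∑ j, (if (j, i) ∈ (Epres ω).image Subtype.val then Fn i j else 0) := by
        rw [← Finset.sum_add_distrib]
        refine Finset.sum_congr rfl fun i _ => ?_
        rw [← Finset.sum_add_distrib]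
    _ = (∑ x ∈ (Epres ω).image Subtype.val, Fn x.1 x.2)
        + ∑ x ∈ (Epres ω).image Subtype.val, Fn x.2 x.1 := by
        congr 1
        · exact sum_ind _ (fun x => Fn x.1 x.2)
        · rw [Finset.sum_comm]
          have := sum_ind ((Epres ω).image Subtype.val) (fun x => Fn x.2 x.1)
          rw [← this]
    _ = ∑ e ∈ Epres ω, (Fn e.1.1 e.1.2 + Fn e.1.2 e.1.1) := by
        rw [Finset.sum_image (fun x _ y _ h => Subtype.ext h),
            Finset.sum_image (fun x _ y _ h => Subtype.ext h), ← Finset.sum_add_distrib]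

lemma quad_bound {c : ℝ} (hc : 0 < c) (ω : EdgeSpace n) (g : EIdx n → Fin n)
    (hg1 : ∀ e ∈ Epres ω, g e = e.1.1 ∨ g e = e.1.2)
    (hg2 : Set.InjOn g ((Epres ω : Finset (EIdx n)) : Set (EIdx n)))
    (u : Fin n → ℝ) (hu : ∀ i, 0 ≤ u i) :
    Real.sqrt (1 + c) * ∑ i, ∑ j, adjMatrix ω i j * u i * u j
      ≤ ∑ i, (c + ∑ l, adjMatrix ω i l) * u i ^ 2 := by
  classical
  have hsq : Real.sqrt (1 + c) ^ 2 = 1 + c := Real.sq_sqrt (by linarith)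
  have hLHS : ∑ i, ∑ j, adjMatrix ω i j * u i * u j
      = ∑ e ∈ Epres ω, (u e.1.1 * u e.1.2 + u e.1.2 * u e.1.1) := by
    rw [← sum_conv ω (fun i j => u i * u j)]
    refine Finset.sum_congr rfl fun i _ => Finset.sum_congr rfl fun j _ => by ring
  have hRHS : ∑ i, (c + ∑ l, adjMatrix ω i l) * u i ^ 2
      = c * ∑ i, u i ^ 2 + ∑ e ∈ Epres ω, (u e.1.1 ^ 2 + u e.1.2 ^ 2) := by
    rw [← sum_conv ω (fun i l => u i ^ 2)]
    rw [Finset.mul_sum, ← Finset.sum_add_distrib]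
    refine Finset.sum_congr rfl fun i _ => ?_
    rw [add_mul, Finset.sum_mul]
  rw [hLHS, hRHS]
  have hkey : ∑ e ∈ Epres ω, u (g e) ^ 2 ≤ ∑ i, u i ^ 2 := by
    rw [← Finset.sum_image (f := fun v => u v ^ 2) (g := g) (fun x hx y hy h => hg2 hx hy h)]
    exact Finset.sum_le_sum_of_subset_of_nonneg (Finset.subset_univ _)
      (fun i _ _ => sq_nonneg _)
  have hedge : ∀ e ∈ Epres ω,
      Real.sqrt (1 + c) * (u e.1.1 * u e.1.2 + u e.1.2 * u e.1.1)
        ≤ (u e.1.1 ^ 2 + u e.1.2 ^ 2) + c * u (g e) ^ 2 := by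
    intro e he
    rcases hg1 e he with hg | hg <;> rw [hg] <;>
      nlinarith [sq_nonneg (Real.sqrt (1 + c) * u e.1.1 - u e.1.2),
        sq_nonneg (Real.sqrt (1 + c) * u e.1.2 - u e.1.1), hsq,
        Real.sqrt_nonneg (1 + c)]
  calc Real.sqrt (1 + c) * ∑ e ∈ Epres ω, (u e.1.1 * u e.1.2 + u e.1.2 * u e.1.1)
      = ∑ e ∈ Epres ω, Real.sqrt (1 + c) * (u e.1.1 * u e.1.2 + u e.1.2 * u e.1.1) :=
        Finset.mul_sum _ _ _
    _ ≤ ∑ e ∈ Epres ω, ((u e.1.1 ^ 2 + u e.1.2 ^ 2) + c * u (g e) ^ 2) :=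
        Finset.sum_le_sum hedge
    _ = ∑ e ∈ Epres ω, (u e.1.1 ^ 2 + u e.1.2 ^ 2) + c * ∑ e ∈ Epres ω, u (g e) ^ 2 := by
        rw [Finset.sum_add_distrib, Finset.mul_sum]
    _ ≤ ∑ e ∈ Epres ω, (u e.1.1 ^ 2 + u e.1.2 ^ 2) + c * ∑ i, u i ^ 2 := by
        have := mul_le_mul_of_nonneg_left hkey (le_of_lt hc)
        linarith
    _ = c * ∑ i, u i ^ 2 + ∑ e ∈ Epres ω, (u e.1.1 ^ 2 + u e.1.2 ^ 2) := by ring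

lemma sr_le_of_quad {c : ℝ} (hc : 0 < c) (A : Matrix (Fin n) (Fin n) ℝ)
    (hA0 : ∀ i j, 0 ≤ A i j)
    (hQ : ∀ u : Fin n → ℝ, (∀ i, 0 ≤ u i) →
      Real.sqrt (1 + c) * ∑ i, ∑ j, A i j * u i * u j ≤ ∑ i, (c + ∑ l, A i l) * u i ^ 2) :
    sr (Kmat c A) ≤ 1 / Real.sqrt (1 + c) := by
  classical
  have hs : 0 < Real.sqrt (1 + c) := Real.sqrt_pos.2 (by linarith)
  refine Real.sSup_le ?_ (by positivity)
  rintro x ⟨μ, hμ, rfl⟩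
  rw [spectrum.mem_iff] at hμ
  rw [Matrix.isUnit_iff_isUnit_det, isUnit_iff_ne_zero, not_ne_iff] at hμ
  obtain ⟨z, hz0, hz⟩ := Matrix.exists_mulVec_eq_zero_iff.2 hμ
  have hKz : ((Kmat c A).map Complex.ofReal) *ᵥ z = μ • z := by
    have h1 : (algebraMap ℂ (Matrix (Fin n) (Fin n) ℂ) μ - (Kmat c A).map Complex.ofReal) *ᵥ z
        = algebraMap ℂ (Matrix (Fin n) (Fin n) ℂ) μ *ᵥ z
          - ((Kmat c A).map Complex.ofReal) *ᵥ z := Matrix.sub_mulVec _ _ _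
    rw [h1] at hz
    have h2 : algebraMap ℂ (Matrix (Fin n) (Fin n) ℂ) μ *ᵥ z = μ • z := by
      rw [Algebra.algebraMap_eq_smul_one, Matrix.smul_mulVec, Matrix.one_mulVec]
    rw [h2] at hz
    rw [sub_eq_zero] at hz
    exact hz.symm
  set u : Fin n → ℝ := fun i => ‖z i‖ with hu
  have hu0 : ∀ i, 0 ≤ u i := fun i => norm_nonneg _
  set d : Fin n → ℝ := fun i => ∑ l, A i l with hd
  have hd0 : ∀ i, 0 ≤ d i := fun i => Finset.sum_nonneg fun l _ => hA0 i l
  have hden : ∀ i, (0 : ℝ) < c + d i := fun i => by have := hd0 i; linarith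
  have hK0 : ∀ i j, 0 ≤ Kmat c A i j := fun i j =>
    div_nonneg (hA0 i j) (le_of_lt (hden i))
  -- coordinatewise bound
  have step1 : ∀ i, ‖μ‖ * u i ≤ ∑ j, Kmat c A i j * u j := by
    intro i
    have hco : μ * z i = ∑ j, (Complex.ofReal (Kmat c A i j)) * z j := by
      have := congrFun hKz i
      simp only [Matrix.mulVec, dotProduct, Matrix.map_apply, Pi.smul_apply,
        smul_eq_mul] at this
      exact this.symm
    calc ‖μ‖ * u i = ‖μ * z i‖ := (norm_mul μ (z i)).symm
      _ = ‖∑ j, (Complex.ofReal (Kmat c A i j)) * z j‖ := by rw [hco]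
      _ ≤ ∑ j, ‖(Complex.ofReal (Kmat c A i j)) * z j‖ :=
          norm_sum_le _ _
      _ = ∑ j, Kmat c A i j * u j := by
          refine Finset.sum_congr rfl fun j _ => ?_
          rw [norm_mul, Complex.norm_of_nonneg (hK0 i j)]
  have step2 : ∀ i, ‖μ‖ * ((c + d i) * u i ^ 2) ≤ (∑ j, A i j * u j) * u i := by
    intro i
    have h1 : (∑ j, Kmat c A i j * u j) * (c + d i) = ∑ j, A i j * u j := by
      rw [Finset.sum_mul]
      refine Finset.sum_congr rfl fun j _ => ?_
      show A i j / (c + d i) * u j * (c + d i) = A i j * u j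
      field_simp
      rw [mul_right_comm, mul_div_assoc, div_self (hden i).ne', mul_one]
    have h2 := mul_le_mul_of_nonneg_right (step1 i) (mul_nonneg (le_of_lt (hden i)) (hu0 i))
    calc ‖μ‖ * ((c + d i) * u i ^ 2)
        = (‖μ‖ * u i) * ((c + d i) * u i) := by ring
      _ ≤ (∑ j, Kmat c A i j * u j) * ((c + d i) * u i) := h2
      _ = ((∑ j, Kmat c A i j * u j) * (c + d i)) * u i := by ring
      _ = (∑ j, A i j * u j) * u i := by rw [h1]
  have step3 : ‖μ‖ * ∑ i, (c + d i) * u i ^ 2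
      ≤ ∑ i, ∑ j, A i j * u i * u j := by
    rw [Finset.mul_sum]
    calc ∑ i, ‖μ‖ * ((c + d i) * u i ^ 2)
        ≤ ∑ i, (∑ j, A i j * u j) * u i := Finset.sum_le_sum fun i _ => step2 i
      _ = ∑ i, ∑ j, A i j * u i * u j := by
          refine Finset.sum_congr rfl fun i _ => ?_
          rw [Finset.sum_mul]
          exact Finset.sum_congr rfl fun j _ => by ring
  have hSpos : 0 < ∑ i, (c + d i) * u i ^ 2 := by
    obtain ⟨i0, hi0⟩ := Function.ne_iff.1 hz0
    have hui0 : 0 < u i0 := norm_pos_iff.2 hi0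
    refine Finset.sum_pos' (fun i _ => mul_nonneg (le_of_lt (hden i)) (sq_nonneg _)) ?_
    exact ⟨i0, Finset.mem_univ _, mul_pos (hden i0) (by positivity)⟩
  have hQu := hQ u hu0
  have hfin : ‖μ‖ * ∑ i, (c + d i) * u i ^ 2
      ≤ (1 / Real.sqrt (1 + c)) * ∑ i, (c + d i) * u i ^ 2 := by
    have h2 : ∑ i, ∑ j, A i j * u i * u j
        ≤ (1 / Real.sqrt (1 + c)) * ∑ i, (c + d i) * u i ^ 2 := by
      rw [div_mul_eq_mul_div, le_div_iff₀ hs, one_mul, mul_comm]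
      exact hQu
    exact (step3.trans h2)
  exact le_of_mul_le_mul_right (by linarith [hfin]) hSpos



lemma bern_true {a : ℝ} (ha : 0 ≤ a) : bernoulliMeasure a {true} = ENNReal.ofReal a := by
  simp only [bernoulliMeasure, Measure.coe_add, Measure.coe_smul, Pi.add_apply, Pi.smul_apply,
    smul_eq_mul]
  rw [Measure.dirac_apply' _ (measurableSet_singleton _),
    Measure.dirac_apply' _ (measurableSet_singleton _)]
  simp

lemma bern_univ {a : ℝ} (ha : 0 ≤ a) (ha1 : a ≤ 1) : bernoulliMeasure a Set.univ = 1 := by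
  simp only [bernoulliMeasure, Measure.coe_add, Measure.coe_smul, Pi.add_apply, Pi.smul_apply,
    smul_eq_mul, measure_univ, mul_one]
  rw [← ENNReal.ofReal_add ha (by linarith)]
  norm_num

lemma erProb {a : ℝ} (ha : 0 ≤ a) (ha1 : a ≤ 1) :
    IsProbabilityMeasure (erMeasure n a) := by
  constructor
  rw [erMeasure, Measure.pi_univ]
  rw [Finset.prod_congr rfl fun _ _ => bern_univ ha ha1, Finset.prod_const, one_pow]

lemma cylinder_measurable (S : Finset (EIdx n)) :
    MeasurableSet {ω : EdgeSpace n | ∀ e ∈ S, ω e = true} := by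
  have : {ω : EdgeSpace n | ∀ e ∈ S, ω e = true}
      = Set.pi Set.univ (fun e => if e ∈ S then {true} else Set.univ) := by
    ext ω
    simp only [Set.mem_setOf_eq, Set.mem_pi, Set.mem_univ, forall_true_left]
    constructor
    · intro h e
      by_cases he : e ∈ S
      · rw [if_pos he]; exact h e he
      · rw [if_neg he]; trivial
    · intro h e he
      have := h e
      rw [if_pos he] at this
      exact this
  rw [this]
  exact MeasurableSet.univ_pi fun e => by
    by_cases he : e ∈ S
    · rw [if_pos he]; exact measurableSet_singleton _
    · rw [if_neg he]; exact MeasurableSet.univ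

lemma cylinder_measure {a : ℝ} (ha : 0 ≤ a) (ha1 : a ≤ 1) (S : Finset (EIdx n)) :
    erMeasure n a {ω : EdgeSpace n | ∀ e ∈ S, ω e = true}
      = ENNReal.ofReal a ^ S.card := by
  classical
  have hset : {ω : EdgeSpace n | ∀ e ∈ S, ω e = true}
      = Set.pi Set.univ (fun e => if e ∈ S then {true} else Set.univ) := by
    ext ω
    simp only [Set.mem_setOf_eq, Set.mem_pi, Set.mem_univ, forall_true_left]
    constructor
    · intro h e
      by_cases he : e ∈ S
      · rw [if_pos he]; exact h e he
      · rw [if_neg he]; trivial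
    · intro h e he
      have := h e
      rw [if_pos he] at this
      exact this
  rw [hset, erMeasure, Measure.pi_pi]
  have : ∀ e : EIdx n, bernoulliMeasure a (if e ∈ S then ({true} : Set Bool) else Set.univ)
      = (if e ∈ S then ENNReal.ofReal a else 1) := by
    intro e
    by_cases he : e ∈ S
    · rw [if_pos he, if_pos he, bern_true ha]
    · rw [if_neg he, if_neg he, bern_univ ha ha1]
  rw [Finset.prod_congr rfl (fun e _ => this e)]
  rw [Finset.prod_ite_mem, Finset.univ_inter, Finset.prod_const]


def mkE (x y : Fin n) : Option (EIdx n) :=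
  if h : x < y then some ⟨(x, y), h⟩ else if h : y < x then some ⟨(y, x), h⟩ else none

lemma mkE_eq_some {x y : Fin n} {e : EIdx n} (h : mkE x y = some e) :
    (e.1.1 = x ∧ e.1.2 = y) ∨ (e.1.1 = y ∧ e.1.2 = x) := by
  unfold mkE at h
  split_ifs at h with h1 h2
  · cases h; exact Or.inl ⟨rfl, rfl⟩
  · cases h; exact Or.inr ⟨rfl, rfl⟩

lemma mkE_isSome {x y : Fin n} (h : x ≠ y) : ∃ e, mkE x y = some e := by
  unfold mkE
  rcases lt_or_gt_of_ne h with h1 | h1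
  · exact ⟨_, dif_pos h1⟩
  · rw [dif_neg (lt_asymm h1)]
    exact ⟨_, dif_pos h1⟩

/-- The countable index type enumerating potential bad structures. -/
abbrev TS (n : ℕ) : Type := (Σ k : ℕ, Fin k → Fin n) × ℕ × ℕ

abbrev tsK (t : TS n) : ℕ := t.1.1
abbrev tsV (t : TS n) : Fin (tsK t) → Fin n := t.1.2
abbrev tsA (t : TS n) : ℕ := t.2.1
abbrev tsB (t : TS n) : ℕ := t.2.2

def ValidT (t : TS n) : Prop :=
  Function.Injective (tsV t) ∧ 2 ≤ tsA t ∧ tsA t < tsK t ∧ tsB t + 3 ≤ tsK t ∧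
    ¬(tsA t = tsK t - 1 ∧ tsB t = 0)

/-- The `i`-th required edge of the bad structure `t`. -/
def FOpt (t : TS n) (i : ℕ) : Option (EIdx n) :=
  if h : i + 1 < tsK t then mkE (tsV t ⟨i, by omega⟩) (tsV t ⟨i + 1, h⟩)
  else if h : i + 1 = tsK t ∧ tsA t < tsK t ∧ 0 < tsK t then
    mkE (tsV t ⟨0, h.2.2⟩) (tsV t ⟨tsA t, h.2.1⟩)
  else if h : i = tsK t ∧ tsB t < tsK t ∧ 0 < tsK t then
    mkE (tsV t ⟨tsK t - 1, by omega⟩) (tsV t ⟨tsB t, h.2.1⟩)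
  else none

lemma FOpt_spec {t : TS n} {i : ℕ} {e : EIdx n} (h : FOpt t i = some e) :
    ∃ x y : Fin (tsK t),
      ((i + 1 < tsK t ∧ (x : ℕ) = i ∧ (y : ℕ) = i + 1)
        ∨ (i + 1 = tsK t ∧ (x : ℕ) = 0 ∧ (y : ℕ) = tsA t)
        ∨ (i = tsK t ∧ (x : ℕ) = tsK t - 1 ∧ (y : ℕ) = tsB t))
      ∧ ((e.1.1 = tsV t x ∧ e.1.2 = tsV t y) ∨ (e.1.1 = tsV t y ∧ e.1.2 = tsV t x)) := by
  unfold FOpt at h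
  split_ifs at h with h1 h2 h3
  · exact ⟨_, _, Or.inl ⟨h1, rfl, rfl⟩, mkE_eq_some h⟩
  · exact ⟨_, _, Or.inr (Or.inl ⟨h2.1, rfl, rfl⟩), mkE_eq_some h⟩
  · exact ⟨_, _, Or.inr (Or.inr ⟨h3.1, rfl, rfl⟩), mkE_eq_some h⟩

lemma FOpt_inj {t : TS n} (hv : ValidT t) {i j : ℕ} {e : EIdx n}
    (hi : FOpt t i = some e) (hj : FOpt t j = some e) : i = j := by
  obtain ⟨hvinj, ha2, hak, hb3, hnot⟩ := hv
  obtain ⟨x1, y1, hc1, he1⟩ := FOpt_spec hi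
  obtain ⟨x2, y2, hc2, he2⟩ := FOpt_spec hj
  have hxy : (x1 = x2 ∧ y1 = y2) ∨ (x1 = y2 ∧ y1 = x2) := by
    rcases he1 with ⟨ha, hb⟩ | ⟨ha, hb⟩ <;> rcases he2 with ⟨ha', hb'⟩ | ⟨ha', hb'⟩
    · exact Or.inl ⟨hvinj (ha.symm.trans ha'), hvinj (hb.symm.trans hb')⟩
    · exact Or.inr ⟨hvinj (ha.symm.trans ha'), hvinj (hb.symm.trans hb')⟩
    · exact Or.inr ⟨hvinj (hb.symm.trans hb'), hvinj (ha.symm.trans ha')⟩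
    · exact Or.inl ⟨hvinj (hb.symm.trans hb'), hvinj (ha.symm.trans ha')⟩
  have hxyv : ((x1 : ℕ) = x2 ∧ (y1 : ℕ) = y2) ∨ ((x1 : ℕ) = y2 ∧ (y1 : ℕ) = x2) := by
    rcases hxy with ⟨h1, h2⟩ | ⟨h1, h2⟩
    · exact Or.inl ⟨congrArg Fin.val h1, congrArg Fin.val h2⟩
    · exact Or.inr ⟨congrArg Fin.val h1, congrArg Fin.val h2⟩
  rcases hc1 with ⟨hA, hx, hy⟩ | ⟨hA, hx, hy⟩ | ⟨hA, hx, hy⟩ <;>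
    rcases hc2 with ⟨hA', hx', hy'⟩ | ⟨hA', hx', hy'⟩ | ⟨hA', hx', hy'⟩ <;>
    omega

/-- The edge set of the bad structure `t`. -/
def ST (t : TS n) : Finset (EIdx n) :=
  (Finset.range (tsK t + 1)).biUnion (fun i => (FOpt t i).toFinset)

lemma FOpt_isSome {t : TS n} (hv : ValidT t) {i : ℕ} (hi : i < tsK t + 1) :
    ∃ e, FOpt t i = some e := by
  obtain ⟨hvinj, ha2, hak, hb3, hnot⟩ := hv
  have hne : ∀ (x y : Fin (tsK t)), (x : ℕ) ≠ (y : ℕ) → tsV t x ≠ tsV t y := by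
    intro x y hxy he
    exact hxy (congrArg Fin.val (hvinj he))
  unfold FOpt
  split_ifs with h1 h2 h3
  · exact mkE_isSome (hne _ _ (by simp only [Fin.val_mk]; omega))
  · exact mkE_isSome (hne _ _ (by simp only [Fin.val_mk]; omega))
  · exact mkE_isSome (hne _ _ (by simp only [Fin.val_mk]; omega))
  · omega

lemma ST_card {t : TS n} (hv : ValidT t) : (ST t).card = tsK t + 1 := by
  classical
  unfold ST
  rw [Finset.card_biUnion]
  · have : ∀ i ∈ Finset.range (tsK t + 1), (FOpt t i).toFinset.card = 1 := by
      intro i hi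
      obtain ⟨e, he⟩ := FOpt_isSome hv (Finset.mem_range.1 hi)
      rw [he]
      rfl
    rw [Finset.sum_congr rfl this, Finset.sum_const, Finset.card_range, smul_eq_mul, mul_one]
  · intro i hi j hj hij
    simp only [Finset.disjoint_left]
    intro e hei hej
    rw [Option.mem_toFinset, Option.mem_def] at hei hej
    exact hij (FOpt_inj hv hei hej)


noncomputable def BT (t : TS n) : Set (EdgeSpace n) :=
  if ValidT t then {ω : EdgeSpace n | ∀ e ∈ ST t, ω e = true} else ∅

lemma BT_measurable (t : TS n) : MeasurableSet (BT t) := by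
  unfold BT
  split_ifs
  exacts [cylinder_measurable _, MeasurableSet.empty]

lemma BT_measure_le {a : ℝ} (ha : 0 ≤ a) (ha1 : a ≤ 1) (t : TS n) :
    erMeasure n a (BT t) ≤ if tsA t < tsK t ∧ tsB t < tsK t
      then ENNReal.ofReal a ^ (tsK t + 1) else 0 := by
  unfold BT
  split_ifs with h1 h2
  · rw [cylinder_measure ha ha1, ST_card h1]
  · exact absurd ⟨h1.2.2.1, by have := h1.2.2.2.1; omega⟩ h2
  · simp
  · simp

lemma tsum_ite_lt (k : ℕ) (C : ℝ≥0∞) :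
    ∑' a : ℕ, (if a < k then C else 0) = (k : ℝ≥0∞) * C := by
  rw [tsum_eq_sum (s := Finset.range k)
    (fun b hb => by rw [if_neg (by simpa using hb)])]
  rw [Finset.sum_congr rfl (fun x hx => if_pos (Finset.mem_range.1 hx)),
    Finset.sum_const, Finset.card_range, nsmul_eq_mul]

lemma tsum_BT_le {a : ℝ} (ha : 0 ≤ a) (ha1 : a ≤ 1) :
    ∑' t : TS n, erMeasure n a (BT t)
      ≤ ∑' k : ℕ, (n : ℝ≥0∞) ^ k * ((k : ℝ≥0∞) * ((k : ℝ≥0∞) * ENNReal.ofReal a ^ (k + 1))) := by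
  have h1 : ∑' t : TS n, erMeasure n a (BT t)
      ≤ ∑' t : TS n, (if tsA t < tsK t ∧ tsB t < tsK t
          then ENNReal.ofReal a ^ (tsK t + 1) else 0) :=
    ENNReal.tsum_le_tsum (BT_measure_le ha ha1)
  refine h1.trans ?_
  have h2 : ∑' t : TS n, (if tsA t < tsK t ∧ tsB t < tsK t
        then ENNReal.ofReal a ^ (tsK t + 1) else 0)
      = ∑' σ : (Σ k : ℕ, Fin k → Fin n), ((σ.1 : ℝ≥0∞) * ((σ.1 : ℝ≥0∞)
          * ENNReal.ofReal a ^ (σ.1 + 1))) := by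
    rw [show (∑' t : TS n, (if tsA t < tsK t ∧ tsB t < tsK t
        then ENNReal.ofReal a ^ (tsK t + 1) else 0))
      = ∑' (σ : Σ k : ℕ, Fin k → Fin n) (ab : ℕ × ℕ),
          (if ab.1 < σ.1 ∧ ab.2 < σ.1 then ENNReal.ofReal a ^ (σ.1 + 1) else 0)
      from ENNReal.tsum_prod (f := fun (σ : Σ k : ℕ, Fin k → Fin n) (ab : ℕ × ℕ) =>
        if ab.1 < σ.1 ∧ ab.2 < σ.1 then ENNReal.ofReal a ^ (σ.1 + 1) else 0)]
    refine tsum_congr fun σ => ?_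
    rw [show (∑' ab : ℕ × ℕ, (if ab.1 < σ.1 ∧ ab.2 < σ.1
        then ENNReal.ofReal a ^ (σ.1 + 1) else 0))
      = ∑' (x : ℕ) (y : ℕ), (if x < σ.1 ∧ y < σ.1 then ENNReal.ofReal a ^ (σ.1 + 1) else 0)
      from ENNReal.tsum_prod (f := fun (x : ℕ) (y : ℕ) =>
        if x < σ.1 ∧ y < σ.1 then ENNReal.ofReal a ^ (σ.1 + 1) else 0)]
    have hinner : ∀ x : ℕ, (∑' y : ℕ, (if x < σ.1 ∧ y < σ.1
        then ENNReal.ofReal a ^ (σ.1 + 1) else 0))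
        = (if x < σ.1 then (σ.1 : ℝ≥0∞) * ENNReal.ofReal a ^ (σ.1 + 1) else 0) := by
      intro x
      by_cases hx : x < σ.1
      · rw [if_pos hx, ← tsum_ite_lt]
        exact tsum_congr fun y => by by_cases hy : y < σ.1 <;> simp [hx, hy]
      · rw [if_neg hx]
        rw [show (0 : ℝ≥0∞) = ∑' _ : ℕ, (0 : ℝ≥0∞) from tsum_zero.symm]
        exact tsum_congr fun y => by simp [hx]
    rw [tsum_congr hinner, tsum_ite_lt]
  rw [h2, ENNReal.tsum_sigma']
  refine ENNReal.tsum_le_tsum fun k => ?_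
  calc ∑' v : Fin k → Fin n, (((⟨k, v⟩ : Σ k : ℕ, Fin k → Fin n).1 : ℝ≥0∞)
        * (((⟨k, v⟩ : Σ k : ℕ, Fin k → Fin n).1 : ℝ≥0∞)
          * ENNReal.ofReal a ^ ((⟨k, v⟩ : Σ k : ℕ, Fin k → Fin n).1 + 1)))
      = ∑' _v : Fin k → Fin n, ((k : ℝ≥0∞) * ((k : ℝ≥0∞) * ENNReal.ofReal a ^ (k + 1))) :=
        tsum_congr fun v => rfl
    _ = (Fintype.card (Fin k → Fin n) : ℝ≥0∞)
          * ((k : ℝ≥0∞) * ((k : ℝ≥0∞) * ENNReal.ofReal a ^ (k + 1))) := by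
        rw [tsum_fintype, Finset.sum_const, Finset.card_univ, nsmul_eq_mul]
    _ ≤ (n : ℝ≥0∞) ^ k * ((k : ℝ≥0∞) * ((k : ℝ≥0∞) * ENNReal.ofReal a ^ (k + 1))) := by
        rw [show (Fintype.card (Fin k → Fin n)) = n ^ k by simp [Fintype.card_fun],
          Nat.cast_pow]

/-- The series constant depending only on `p₁`. -/
noncomputable def Cbound (p₁ : ℝ) : ℝ≥0∞ := ∑' k : ℕ, (k : ℝ≥0∞) * (k : ℝ≥0∞) * ENNReal.ofReal p₁ ^ k

lemma Cbound_ne_top {p₁ : ℝ} (hp0 : 0 ≤ p₁) (hp1 : p₁ < 1) : Cbound p₁ ≠ ⊤ := by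
  have hsum : Summable (fun k : ℕ => (k : ℝ) * (k : ℝ) * p₁ ^ k) := by
    have := summable_pow_mul_geometric_of_norm_lt_one (R := ℝ) 2
      (r := p₁) (by rw [Real.norm_eq_abs, abs_of_nonneg hp0]; exact hp1)
    refine this.congr fun k => ?_
    ring
  have heq : Cbound p₁ = ENNReal.ofReal (∑' k : ℕ, (k : ℝ) * (k : ℝ) * p₁ ^ k) := by
    rw [ENNReal.ofReal_tsum_of_nonneg
      (fun k => by positivity) hsum]
    refine tsum_congr fun k => ?_
    rw [ENNReal.ofReal_mul (by positivity), ENNReal.ofReal_mul (by positivity),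
      ENNReal.ofReal_natCast, ENNReal.ofReal_pow hp0]
  rw [heq]
  exact ENNReal.ofReal_ne_top

lemma term_bound {p p₁ : ℝ} (hp0 : 0 ≤ p) (hpp : p ≤ p₁) (hp₁ : p₁ ≤ 1) (hn : 1 ≤ n) (k : ℕ) :
    (n : ℝ≥0∞) ^ k * ((k : ℝ≥0∞) * ((k : ℝ≥0∞) * ENNReal.ofReal (p / n) ^ (k + 1)))
      ≤ ((k : ℝ≥0∞) * (k : ℝ≥0∞) * ENNReal.ofReal p₁ ^ k) * ((n : ℝ≥0∞))⁻¹ := by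
  have hnR : (0 : ℝ) < (n : ℝ) := by exact_mod_cast hn
  have hq : (n : ℝ≥0∞) * ENNReal.ofReal (p / n) = ENNReal.ofReal p := by
    rw [← ENNReal.ofReal_natCast n, ← ENNReal.ofReal_mul (by positivity)]
    congr 1
    field_simp
  have hstep : (n : ℝ≥0∞) ^ k * ENNReal.ofReal (p / n) ^ (k + 1)
      = ENNReal.ofReal p ^ k * ENNReal.ofReal (p / n) := by
    rw [pow_succ, ← mul_assoc, ← mul_pow, hq]
  have hple : ENNReal.ofReal p ^ k ≤ ENNReal.ofReal p₁ ^ k :=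
    pow_le_pow_left' (ENNReal.ofReal_le_ofReal hpp) k
  have hqle : ENNReal.ofReal (p / n) ≤ ((n : ℝ≥0∞))⁻¹ := by
    have h1 : p / n ≤ 1 / n := by
      gcongr
      linarith
    calc ENNReal.ofReal (p / n) ≤ ENNReal.ofReal (1 / n) := ENNReal.ofReal_le_ofReal h1
      _ = ENNReal.ofReal 1 / ENNReal.ofReal n := ENNReal.ofReal_div_of_pos hnR
      _ = ((n : ℝ≥0∞))⁻¹ := by rw [ENNReal.ofReal_one, one_div, ENNReal.ofReal_natCast]
  calc (n : ℝ≥0∞) ^ k * ((k : ℝ≥0∞) * ((k : ℝ≥0∞) * ENNReal.ofReal (p / n) ^ (k + 1)))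
      = ((k : ℝ≥0∞) * (k : ℝ≥0∞)) * ((n : ℝ≥0∞) ^ k * ENNReal.ofReal (p / n) ^ (k + 1)) := by
        ring
    _ = ((k : ℝ≥0∞) * (k : ℝ≥0∞)) * (ENNReal.ofReal p ^ k * ENNReal.ofReal (p / n)) := by
        rw [hstep]
    _ ≤ ((k : ℝ≥0∞) * (k : ℝ≥0∞)) * (ENNReal.ofReal p₁ ^ k * ((n : ℝ≥0∞))⁻¹) :=
        mul_le_mul_right (mul_le_mul' hple hqle) _
    _ = ((k : ℝ≥0∞) * (k : ℝ≥0∞) * ENNReal.ofReal p₁ ^ k) * ((n : ℝ≥0∞))⁻¹ := by ring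

lemma union_bound {p p₁ : ℝ} (hp0 : 0 ≤ p) (hpp : p ≤ p₁) (hp₁ : p₁ ≤ 1) (hn : 1 ≤ n) :
    erMeasure n (p / n) (⋃ t : TS n, BT t) ≤ Cbound p₁ * ((n : ℝ≥0∞))⁻¹ := by
  have hage : (0:ℝ) ≤ p / n := by positivity
  have hale : p / n ≤ 1 := by
    have hnR : (1 : ℝ) ≤ (n : ℝ) := by exact_mod_cast hn
    rw [div_le_one (by linarith)]
    linarith
  calc erMeasure n (p / n) (⋃ t : TS n, BT t)
      ≤ ∑' t : TS n, erMeasure n (p / n) (BT t) := measure_iUnion_le _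
    _ ≤ ∑' k : ℕ, (n : ℝ≥0∞) ^ k * ((k : ℝ≥0∞) * ((k : ℝ≥0∞)
          * ENNReal.ofReal (p / n) ^ (k + 1))) := tsum_BT_le hage hale
    _ ≤ ∑' k : ℕ, ((k : ℝ≥0∞) * (k : ℝ≥0∞) * ENNReal.ofReal p₁ ^ k) * ((n : ℝ≥0∞))⁻¹ :=
        ENNReal.tsum_le_tsum (term_bound hp0 hpp hp₁ hn)
    _ = Cbound p₁ * ((n : ℝ≥0∞))⁻¹ := ENNReal.tsum_mul_right


lemma detMain {c : ℝ} (hc : 0 < c) (ω : EdgeSpace n) (hB : ¬ BadE (Epres ω)) :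
    sr (Kmat c (adjMatrix ω)) ≤ 1 / Real.sqrt (1 + c) := by
  have hA0 : ∀ i j, 0 ≤ adjMatrix ω i j := by
    intro i j
    show (0:ℝ) ≤ (if h : i < j then (if ω ⟨(i, j), h⟩ then 1 else 0)
      else if h' : j < i then (if ω ⟨(j, i), h'⟩ then 1 else 0) else 0)
    split_ifs <;> norm_num
  obtain ⟨g, hg1, hg2⟩ := exists_injection hB
  exact sr_le_of_quad hc _ hA0 (fun u hu => quad_bound hc ω g hg1 hg2 u hu)

lemma bad_subset_union (ω : EdgeSpace n) (hB : BadE (Epres ω)) : ω ∈ ⋃ t : TS n, BT t := by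
  obtain ⟨k, a, b, vN, ⟨hinj, hadjp⟩, ha2, hak, hb3, hnot, hch1, hch2⟩ := hB
  set t : TS n := (⟨k, fun i : Fin k => vN i⟩, (a, b)) with ht
  have hval : ValidT t := by
    refine ⟨?_, ha2, hak, hb3, hnot⟩
    intro i j hij
    exact Fin.ext (hinj i j i.2 j.2 hij)
  refine Set.mem_iUnion.2 ⟨t, ?_⟩
  rw [BT, if_pos hval]
  intro e he
  obtain ⟨i, hirange, hei⟩ := Finset.mem_biUnion.1 he
  rw [Option.mem_toFinset, Option.mem_def] at hei
  obtain ⟨x, y, hcase, hends⟩ := FOpt_spec hei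
  have hadj : AdjF (Epres ω) (tsV t x) (tsV t y) := by
    have hvx : tsV t x = vN (x : ℕ) := rfl
    have hvy : tsV t y = vN (y : ℕ) := rfl
    rcases hcase with ⟨hik, hx, hy⟩ | ⟨hik, hx, hy⟩ | ⟨hik, hx, hy⟩
    · rw [hvx, hvy, hx, hy]; exact hadjp i hik
    · rw [hvx, hvy, hx, hy]; exact hch1
    · rw [hvx, hvy, hx, hy]; exact hch2
  obtain ⟨e', he', hends'⟩ := adjF_mem_ends hadj
  have hee : e = e' := by
    refine ends_injective ?_
    rw [hends']
    unfold ends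
    rcases hends with ⟨h1, h2⟩ | ⟨h1, h2⟩
    · rw [h1, h2]
    · rw [h1, h2, Finset.pair_comm]
  rw [hee]
  exact (Finset.mem_filter.1 he').2

end ERaux

open scoped ENNReal

/-- For fixed c > 0 and 0 < p₀ < p₁ < 1,
inf_{p ∈ [p₀,p₁]} P_p{ sr(K_n) ≤ 1/√(1+c) } → 1 as n → ∞. -/
theorem erdos_renyi_markov_spectral_radius_uniform_in_p
    (c : ℝ) (hc : 0 < c) (p₀ p₁ : ℝ) (hp₀ : 0 < p₀) (hp : p₀ < p₁) (hp₁ : p₁ < 1) :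
    Filter.Tendsto
      (fun n : ℕ =>
        ⨅ p ∈ Set.Icc p₀ p₁,
          erMeasure n (p / n)
            {ω : EdgeSpace n | sr (Kmat c (adjMatrix ω)) ≤ 1 / Real.sqrt (1 + c)})
      Filter.atTop (nhds 1) := by
  classical
  have hp₁0 : (0:ℝ) ≤ p₁ := le_of_lt (lt_trans hp₀ hp)
  have hCtop : ERaux.Cbound p₁ ≠ ⊤ := ERaux.Cbound_ne_top hp₁0 hp₁
  rw [ENNReal.tendsto_nhds ENNReal.one_ne_top]
  intro ε hε
  rcases eq_or_ne ε ⊤ with hεtop | hεtop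
  · filter_upwards [Filter.eventually_ge_atTop 1] with m hm1
    constructor
    · rw [hεtop]
      simp
    · rw [hεtop]
      exact le_top
  obtain ⟨N, hN⟩ := ENNReal.exists_nat_gt ((ENNReal.div_lt_top hCtop hε.ne').ne)
  filter_upwards [Filter.eventually_ge_atTop (max N 1)] with m hm
  have hm1 : 1 ≤ m := le_trans (le_max_right N 1) hm
  have hmN : N ≤ m := le_trans (le_max_left N 1) hm
  have hmR : (1:ℝ) ≤ (m:ℝ) := by exact_mod_cast hm1
  have hkey : ERaux.Cbound p₁ * ((m : ℝ≥0∞))⁻¹ ≤ ε := by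
    rw [show ERaux.Cbound p₁ * ((m : ℝ≥0∞))⁻¹ = ERaux.Cbound p₁ / m from rfl]
    rw [ENNReal.div_le_iff_le_mul (Or.inl (by
        have : (0:ℝ≥0∞) < (m:ℝ≥0∞) := by exact_mod_cast hm1
        exact this.ne'))
      (Or.inl (ENNReal.natCast_ne_top m))]
    have h2 : ERaux.Cbound p₁ < N * ε := by
      rw [← ENNReal.div_lt_iff (Or.inl hε.ne') (Or.inl hεtop)]
      exact hN
    calc ERaux.Cbound p₁ ≤ (N : ℝ≥0∞) * ε := le_of_lt h2
      _ ≤ (m : ℝ≥0∞) * ε := mul_le_mul_left (by exact_mod_cast hmN) _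
      _ = ε * m := mul_comm _ _
  constructor
  · -- lower bound
    refine le_iInf₂ fun p hp => ?_
    obtain ⟨hpl, hpu⟩ := hp
    have ha0 : (0:ℝ) ≤ p / m := div_nonneg (by linarith) (Nat.cast_nonneg m)
    have ha1 : p / m ≤ 1 := by
      rw [div_le_one (by linarith)]
      nlinarith
    haveI := ERaux.erProb (n := m) ha0 ha1
    have hsub : (⋃ t : ERaux.TS m, ERaux.BT t)ᶜ
        ⊆ {ω : EdgeSpace m | sr (Kmat c (adjMatrix ω)) ≤ 1 / Real.sqrt (1 + c)} := by
      intro ω hω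
      by_cases hbad : ERaux.BadE (ERaux.Epres ω)
      · exact absurd (ERaux.bad_subset_union ω hbad) hω
      · exact ERaux.detMain hc ω hbad
    have hUmeas : MeasurableSet (⋃ t : ERaux.TS m, ERaux.BT t) :=
      MeasurableSet.iUnion fun t => ERaux.BT_measurable t
    calc (1 : ℝ≥0∞) - ε
        ≤ 1 - ERaux.Cbound p₁ * ((m : ℝ≥0∞))⁻¹ := tsub_le_tsub_left hkey 1
      _ ≤ 1 - erMeasure m (p / m) (⋃ t : ERaux.TS m, ERaux.BT t) :=
          tsub_le_tsub_left (ERaux.union_bound (by linarith) hpu (le_of_lt hp₁) hm1) 1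
      _ = erMeasure m (p / m) ((⋃ t : ERaux.TS m, ERaux.BT t)ᶜ) :=
          (prob_compl_eq_one_sub hUmeas).symm
      _ ≤ erMeasure m (p / m)
            {ω : EdgeSpace m | sr (Kmat c (adjMatrix ω)) ≤ 1 / Real.sqrt (1 + c)} :=
          measure_mono hsub

  · -- upper bound
    have hmem : p₀ ∈ Set.Icc p₀ p₁ := ⟨le_refl _, le_of_lt hp⟩
    refine le_trans (iInf₂_le p₀ hmem) ?_
    have ha0 : (0:ℝ) ≤ p₀ / m := div_nonneg (le_of_lt hp₀) (Nat.cast_nonneg m)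
    have ha1 : p₀ / m ≤ 1 := by
      rw [div_le_one (by linarith)]
      nlinarith
    haveI := ERaux.erProb (n := m) ha0 ha1
    exact le_trans prob_le_one le_self_add
end

section
/- Fix c > 0, p > 0, and an integer k ≥ 1. There exists a constant C, depending only on k, p, and c, such that for all n > p, Var[β_k(K_n)] ≤ C/n, where A_n is the adjacency matrix of a random graph following G(n, p/n) and K_n = D_n^{-1}A_n with D_n the diagonal matrix with diagonal c·1_n + A_n·1_n. -/
open MeasureTheory Filter

namespace ERVar

open Finset


variable {ι : Type*} [Fintype ι] [DecidableEq ι]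

/-- average over coordinate `i` with weight `q` on `true`. -/
def Aop (q : ℝ) (i : ι) (g : (ι → Bool) → ℝ) : (ι → Bool) → ℝ :=
  fun ω => q * g (Function.update ω i true) + (1 - q) * g (Function.update ω i false)

/-- iterated averaging. -/
def Eop (q : ℝ) : List ι → ((ι → Bool) → ℝ) → ((ι → Bool) → ℝ)
  | [], g => g
  | i :: L, g => Aop q i (Eop q L g)

lemma Aop_le (q : ℝ) (hq0 : 0 ≤ q) (hq1 : q ≤ 1) (i : ι) {g h : (ι → Bool) → ℝ}
    (hgh : ∀ ω, g ω ≤ h ω) : ∀ ω, Aop q i g ω ≤ Aop q i h ω := by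
  intro ω
  unfold Aop
  have := hgh (Function.update ω i true)
  have := hgh (Function.update ω i false)
  nlinarith

lemma Aop_const (q : ℝ) (i : ι) (r : ℝ) : Aop q i (fun _ => r) = fun _ => r := by
  funext ω; unfold Aop; ring

lemma Aop_sub (q : ℝ) (i : ι) (g h : (ι → Bool) → ℝ) :
    Aop q i (fun ω => g ω - h ω) = fun ω => Aop q i g ω - Aop q i h ω := by
  funext ω; unfold Aop; ring

lemma Aop_abs_le (q : ℝ) (hq0 : 0 ≤ q) (hq1 : q ≤ 1) (i : ι) {g : (ι → Bool) → ℝ} {B : ℝ}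
    (hg : ∀ ω, |g ω| ≤ B) : ∀ ω, |Aop q i g ω| ≤ B := by
  intro ω
  unfold Aop
  have h1 := abs_le.1 (hg (Function.update ω i true))
  have h2 := abs_le.1 (hg (Function.update ω i false))
  rw [abs_le]
  constructor <;> nlinarith [h1.1, h1.2, h2.1, h2.2]

lemma Aop_comp_update (q : ℝ) {i j : ι} (hij : i ≠ j) (g : (ι → Bool) → ℝ) (b : Bool) :
    Aop q j (fun ω => g (Function.update ω i b)) =
      fun ω => Aop q j g (Function.update ω i b) := by
  funext ω
  simp only [Aop]
  rw [Function.update_comm hij.symm, Function.update_comm hij.symm]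

lemma Eop_le (q : ℝ) (hq0 : 0 ≤ q) (hq1 : q ≤ 1) (L : List ι) {g h : (ι → Bool) → ℝ}
    (hgh : ∀ ω, g ω ≤ h ω) : ∀ ω, Eop q L g ω ≤ Eop q L h ω := by
  induction L with
  | nil => exact hgh
  | cons i L ih => exact Aop_le q hq0 hq1 i ih

lemma Eop_const (q : ℝ) (L : List ι) (r : ℝ) : Eop q L (fun _ => r) = fun _ => r := by
  induction L with
  | nil => rfl
  | cons i L ih => show Aop q i _ = _; rw [ih, Aop_const]

lemma Eop_sub (q : ℝ) (L : List ι) (g h : (ι → Bool) → ℝ) :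
    Eop q L (fun ω => g ω - h ω) = fun ω => Eop q L g ω - Eop q L h ω := by
  induction L with
  | nil => rfl
  | cons i L ih => show Aop q i _ = _; rw [ih, Aop_sub]; rfl

lemma Aop_const' (q : ℝ) (i : ι) (r : ℝ) (ω : ι → Bool) : Aop q i (fun _ => r) ω = r := by
  unfold Aop; ring

lemma Aop_sub' (q : ℝ) (i : ι) (g h : (ι → Bool) → ℝ) (ω : ι → Bool) :
    Aop q i (fun ω => g ω - h ω) ω = Aop q i g ω - Aop q i h ω := by
  unfold Aop; ring

lemma Eop_abs_le (q : ℝ) (hq0 : 0 ≤ q) (hq1 : q ≤ 1) (L : List ι) {g : (ι → Bool) → ℝ} {B : ℝ}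
    (hg : ∀ ω, |g ω| ≤ B) : ∀ ω, |Eop q L g ω| ≤ B := by
  induction L with
  | nil => exact hg
  | cons i L ih => exact Aop_abs_le q hq0 hq1 i ih

lemma Eop_comp_update (q : ℝ) {i : ι} (L : List ι) (hiL : i ∉ L) (g : (ι → Bool) → ℝ) (b : Bool) :
    Eop q L (fun ω => g (Function.update ω i b)) =
      fun ω => Eop q L g (Function.update ω i b) := by
  induction L with
  | nil => rfl
  | cons j L ih =>
    have hij : i ≠ j := fun h => hiL (h ▸ (List.mem_cons_self : j ∈ j :: L))
    have hiL' : i ∉ L := fun h => hiL (List.mem_cons_of_mem _ h)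
    show Aop q j _ = _
    rw [ih hiL', Aop_comp_update q hij]
    rfl

/-- two-point variance identity. -/
lemma Aop_sq (q : ℝ) (i : ι) (g : (ι → Bool) → ℝ) (ω : ι → Bool) :
    (Aop q i g ω) ^ 2 = Aop q i (fun ω => (g ω) ^ 2) ω -
      q * (1 - q) * (g (Function.update ω i true) - g (Function.update ω i false)) ^ 2 := by
  unfold Aop; ring

/-- Tensorization / Efron–Stein-type bound. -/
theorem Eop_var_le (q : ℝ) (hq0 : 0 ≤ q) (hq1 : q ≤ 1) (L : List ι) (hL : L.Nodup)
    (f : (ι → Bool) → ℝ) (B : ℝ)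
    (hB : ∀ i ∈ L, ∀ ω, |f (Function.update ω i true) - f (Function.update ω i false)| ≤ B) :
    ∀ ω, Eop q L (fun ω => (f ω) ^ 2) ω - (Eop q L f ω) ^ 2 ≤
      (L.length : ℝ) * (q * (1 - q)) * B ^ 2 := by
  induction L with
  | nil => intro ω; simp [Eop]
  | cons i L ih =>
    intro ω
    have hiL : i ∉ L := (List.nodup_cons.1 hL).1
    have hLd : L.Nodup := (List.nodup_cons.1 hL).2
    have hB' : ∀ j ∈ L, ∀ ω, |f (Function.update ω j true) - f (Function.update ω j false)| ≤ B :=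
      fun j hj => hB j (List.mem_cons_of_mem _ hj)
    have key := Aop_sq q i (Eop q L f) ω
    show Aop q i (Eop q L (fun ω => (f ω) ^ 2)) ω - (Aop q i (Eop q L f) ω) ^ 2 ≤ _
    rw [key]
    -- first part
    have h1 : Aop q i (Eop q L (fun ω => (f ω) ^ 2)) ω -
        Aop q i (fun ω => (Eop q L f ω) ^ 2) ω ≤ (L.length : ℝ) * (q * (1 - q)) * B ^ 2 := by
      have h0 := Aop_le q hq0 hq1 i (g := fun ω => Eop q L (fun ω => (f ω) ^ 2) ω - (Eop q L f ω) ^ 2)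
        (h := fun _ => (L.length : ℝ) * (q * (1 - q)) * B ^ 2) (ih hLd hB') ω
      rw [Aop_const' q i ((L.length : ℝ) * (q * (1 - q)) * B ^ 2) ω,
        Aop_sub' q i (Eop q L (fun ω => (f ω) ^ 2)) (fun ω => (Eop q L f ω) ^ 2) ω] at h0
      exact h0
    -- second part : the martingale increment
    have hdiff : Eop q L f (Function.update ω i true) - Eop q L f (Function.update ω i false) =
        Eop q L (fun ω => f (Function.update ω i true) - f (Function.update ω i false)) ω := by
      rw [Eop_sub]
      rw [Eop_comp_update q L hiL f true, Eop_comp_update q L hiL f false]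
    have hBnn : 0 ≤ B := le_trans (abs_nonneg _) (hB i List.mem_cons_self ω)
    have h2 : (Eop q L f (Function.update ω i true) - Eop q L f (Function.update ω i false)) ^ 2
        ≤ B ^ 2 := by
      rw [hdiff]
      have := Eop_abs_le q hq0 hq1 L (hB i List.mem_cons_self) ω
      exact sq_le_sq' (by linarith [(abs_le.1 this).1]) (abs_le.1 this).2
    have hqq : 0 ≤ q * (1 - q) := mul_nonneg hq0 (by linarith)
    have : q * (1 - q) * (Eop q L f (Function.update ω i true) -
        Eop q L f (Function.update ω i false)) ^ 2 ≤ q * (1 - q) * B ^ 2 :=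
      mul_le_mul_of_nonneg_left h2 hqq
    push_cast [List.length_cons]
    nlinarith


def wB (q : ℝ) : Bool → ℝ := fun b => if b then q else 1 - q

lemma Eop_eq_sum (q : ℝ) (L : List ι) (hL : L.Nodup) (f : (ι → Bool) → ℝ) (ω : ι → Bool) :
    Eop q L f ω = ∑ τ : ι → Bool,
      (∏ i : ι, (if i ∈ L then wB q (τ i) else if τ i = ω i then (1:ℝ) else 0)) * f τ := by
  induction L generalizing ω with
  | nil =>
    rw [Finset.sum_eq_single ω]
    · simp [Eop]
    · intro τ _ hτ
      have : ∃ i, τ i ≠ ω i := by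
        by_contra h; push_neg at h; exact hτ (funext h)
      obtain ⟨i, hi⟩ := this
      rw [Finset.prod_eq_zero (Finset.mem_univ i)]
      · ring
      · simp [hi]
    · intro h; exact absurd (Finset.mem_univ ω) h
  | cons j L ih =>
    have hjL : j ∉ L := (List.nodup_cons.1 hL).1
    have hLd : L.Nodup := (List.nodup_cons.1 hL).2
    show Aop q j (Eop q L f) ω = _
    unfold Aop
    rw [ih hLd (Function.update ω j true), ih hLd (Function.update ω j false)]
    rw [Finset.mul_sum, Finset.mul_sum, ← Finset.sum_add_distrib]
    refine Finset.sum_congr rfl fun τ _ => ?_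
    have hsplit : ∀ b : Bool,
        (∏ i : ι, (if i ∈ L then wB q (τ i) else if τ i = Function.update ω j b i then (1:ℝ) else 0))
        = (if τ j = b then (1:ℝ) else 0) *
          ∏ i ∈ Finset.univ.erase j, (if i ∈ L then wB q (τ i) else if τ i = ω i then (1:ℝ) else 0) := by
      intro b
      rw [← Finset.mul_prod_erase Finset.univ _ (Finset.mem_univ j)]
      congr 1
      · simp [hjL]
      · exact Finset.prod_congr rfl fun i hi => by
          have hij : i ≠ j := (Finset.mem_erase.1 hi).1
          rw [Function.update_of_ne hij]
    have hsplit2 : (∏ i : ι, (if i ∈ (j :: L) then wB q (τ i) else if τ i = ω i then (1:ℝ) else 0))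
        = wB q (τ j) *
          ∏ i ∈ Finset.univ.erase j, (if i ∈ L then wB q (τ i) else if τ i = ω i then (1:ℝ) else 0) := by
      rw [← Finset.mul_prod_erase Finset.univ _ (Finset.mem_univ j)]
      congr 1
      · simp
      · exact Finset.prod_congr rfl fun i hi => by
          have hij : i ≠ j := (Finset.mem_erase.1 hi).1
          simp [List.mem_cons, hij]
    rw [hsplit true, hsplit false, hsplit2]
    cases hτj : τ j <;> simp [wB, hτj] <;> ring

lemma Eop_univ_eq_sum (q : ℝ) (f : (ι → Bool) → ℝ) (ω : ι → Bool) :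
    Eop q Finset.univ.toList f ω = ∑ τ : ι → Bool, (∏ i : ι, wB q (τ i)) * f τ := by
  rw [Eop_eq_sum q _ Finset.univ.nodup_toList f ω]
  exact Finset.sum_congr rfl fun τ _ => by
    congr 1
    exact Finset.prod_congr rfl fun i _ => by simp [Finset.mem_toList]



/-- substochastic nonnegative matrix -/
def SubSt {n : ℕ} (M : Matrix (Fin n) (Fin n) ℝ) : Prop :=
  (∀ i j, 0 ≤ M i j) ∧ (∀ i, ∑ j, M i j ≤ 1)

lemma subst_one {n : ℕ} : SubSt (1 : Matrix (Fin n) (Fin n) ℝ) := by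
  constructor
  · intro i j
    rw [Matrix.one_apply]
    split <;> norm_num
  · intro i
    simp [Matrix.one_apply]

lemma subst_mul {n : ℕ} {M N : Matrix (Fin n) (Fin n) ℝ} (hM : SubSt M) (hN : SubSt N) :
    SubSt (M * N) := by
  constructor
  · intro i j
    rw [Matrix.mul_apply]
    exact Finset.sum_nonneg fun l _ => mul_nonneg (hM.1 i l) (hN.1 l j)
  · intro i
    calc ∑ j, (M * N) i j = ∑ j, ∑ l, M i l * N l j := by simp [Matrix.mul_apply]
      _ = ∑ l, M i l * ∑ j, N l j := by rw [Finset.sum_comm]; simp [Finset.mul_sum]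
      _ ≤ ∑ l, M i l * 1 := Finset.sum_le_sum fun l _ =>
          mul_le_mul_of_nonneg_left (hN.2 l) (hM.1 i l)
      _ = ∑ l, M i l := by simp
      _ ≤ 1 := hM.2 i

lemma subst_pow {n : ℕ} {M : Matrix (Fin n) (Fin n) ℝ} (hM : SubSt M) (k : ℕ) :
    SubSt (M ^ k) := by
  induction k with
  | zero => simpa using subst_one
  | succ k ih => rw [pow_succ]; exact subst_mul ih hM

lemma subst_entry_le_one {n : ℕ} {M : Matrix (Fin n) (Fin n) ℝ} (hM : SubSt M) (i j : Fin n) :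
    M i j ≤ 1 :=
  le_trans (Finset.single_le_sum (fun l _ => hM.1 i l) (Finset.mem_univ j)) (hM.2 i)

/-- telescoping identity for matrix powers -/
lemma pow_sub_pow {n : ℕ} (M M' : Matrix (Fin n) (Fin n) ℝ) (k : ℕ) :
    M' ^ k - M ^ k = ∑ a ∈ Finset.range k, M' ^ a * (M' - M) * M ^ (k - 1 - a) := by
  induction k with
  | zero => simp
  | succ k ih =>
    have step : M' ^ (k + 1) - M ^ (k + 1) = M' * (M' ^ k - M ^ k) + (M' - M) * M ^ k := by
      rw [pow_succ', pow_succ']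
      noncomm_ring
    rw [step, ih, Finset.mul_sum]
    rw [Finset.sum_range_succ' (fun a => M' ^ a * (M' - M) * M ^ (k + 1 - 1 - a)) k]
    congr 1
    · refine Finset.sum_congr rfl fun a ha => ?_
      have ha' : a < k := Finset.mem_range.1 ha
      have : k + 1 - 1 - (a + 1) = k - 1 - a := by omega
      rw [this, pow_succ']
      noncomm_ring
    · simp

lemma trace_pow_diff_le {n : ℕ} {M M' : Matrix (Fin n) (Fin n) ℝ}
    (hM : SubSt M) (hM' : SubSt M') (k : ℕ) {δ : ℝ}
    (hδ : ∑ i, ∑ j, |M' i j - M i j| ≤ δ) :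
    |Matrix.trace (M' ^ k) - Matrix.trace (M ^ k)| ≤ k * δ := by
  have hδ0 : 0 ≤ δ :=
    le_trans (Finset.sum_nonneg fun i _ => Finset.sum_nonneg fun j _ => abs_nonneg _) hδ
  have key : ∀ a b : ℕ, |Matrix.trace (M' ^ a * (M' - M) * M ^ b)| ≤ δ := by
    intro a b
    rw [Matrix.trace_mul_cycle (M' ^ a) (M' - M) (M ^ b)]
    set P : Matrix (Fin n) (Fin n) ℝ := M ^ b * M' ^ a with hP
    have hPs : SubSt P := subst_mul (subst_pow hM b) (subst_pow hM' a)
    have : Matrix.trace (P * (M' - M)) = ∑ i, ∑ l, P i l * (M' - M) l i := by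
      simp [Matrix.trace, Matrix.diag, Matrix.mul_apply]
    rw [this]
    calc |∑ i, ∑ l, P i l * (M' - M) l i| ≤ ∑ i, |∑ l, P i l * (M' - M) l i| :=
          Finset.abs_sum_le_sum_abs _ _
      _ ≤ ∑ i, ∑ l, |P i l * (M' - M) l i| :=
          Finset.sum_le_sum fun i _ => Finset.abs_sum_le_sum_abs _ _
      _ ≤ ∑ i, ∑ l, |(M' - M) l i| := by
          refine Finset.sum_le_sum fun i _ => Finset.sum_le_sum fun l _ => ?_
          rw [abs_mul]
          have h1 : |P i l| ≤ 1 := by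
            rw [abs_of_nonneg (hPs.1 i l)]; exact subst_entry_le_one hPs i l
          calc |P i l| * |(M' - M) l i| ≤ 1 * |(M' - M) l i| :=
                mul_le_mul_of_nonneg_right h1 (abs_nonneg _)
            _ = |(M' - M) l i| := one_mul _
      _ = ∑ l, ∑ i, |(M' - M) l i| := Finset.sum_comm
      _ = ∑ l, ∑ i, |M' l i - M l i| := by simp [Matrix.sub_apply]
      _ ≤ δ := hδ
  have htel := pow_sub_pow M M' k
  calc |Matrix.trace (M' ^ k) - Matrix.trace (M ^ k)|
      = |Matrix.trace (M' ^ k - M ^ k)| := by rw [Matrix.trace_sub]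
    _ = |Matrix.trace (∑ a ∈ Finset.range k, M' ^ a * (M' - M) * M ^ (k - 1 - a))| := by
        rw [htel]
    _ = |∑ a ∈ Finset.range k, Matrix.trace (M' ^ a * (M' - M) * M ^ (k - 1 - a))| := by
        rw [Matrix.trace_sum]
    _ ≤ ∑ a ∈ Finset.range k, |Matrix.trace (M' ^ a * (M' - M) * M ^ (k - 1 - a))| :=
        Finset.abs_sum_le_sum_abs _ _
    _ ≤ ∑ a ∈ Finset.range k, δ := Finset.sum_le_sum fun a _ => key _ _
    _ = k * δ := by simp [mul_comm]


section Specific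

lemma adj_nonneg {n : ℕ} (ω : EdgeSpace n) (i j : Fin n) : 0 ≤ adjMatrix ω i j := by
  simp only [adjMatrix, Matrix.of_apply]
  split_ifs <;> norm_num

lemma subst_K {n : ℕ} {c : ℝ} (hc : 0 < c) {A : Matrix (Fin n) (Fin n) ℝ}
    (hA : ∀ i j, 0 ≤ A i j) : SubSt (Kmat c A) := by
  constructor
  · intro i j
    simp only [Kmat, Matrix.of_apply]
    have hs : 0 ≤ ∑ l, A i l := Finset.sum_nonneg fun l _ => hA i l
    exact div_nonneg (hA i j) (by linarith)
  · intro i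
    simp only [Kmat, Matrix.of_apply]
    have hs : 0 ≤ ∑ l, A i l := Finset.sum_nonneg fun l _ => hA i l
    rw [← Finset.sum_div]
    rw [div_le_one (by linarith)]
    linarith

/-- rows away from the flipped edge do not change -/
lemma adj_row_eq {n : ℕ} (ω : EdgeSpace n) (e : {e : Fin n × Fin n // e.1 < e.2})
    {i : Fin n} (hi1 : i ≠ e.val.1) (hi2 : i ≠ e.val.2) (b b' : Bool) (j : Fin n) :
    adjMatrix (Function.update ω e b) i j = adjMatrix (Function.update ω e b') i j := by
  simp only [adjMatrix, Matrix.of_apply]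
  by_cases h : i < j
  · have hne : (⟨(i, j), h⟩ : {e : Fin n × Fin n // e.1 < e.2}) ≠ e := fun heq =>
      hi1 (by rw [← heq])
    simp only [dif_pos h, Function.update_of_ne hne]
  · by_cases h' : j < i
    · have hne : (⟨(j, i), h'⟩ : {e : Fin n × Fin n // e.1 < e.2}) ≠ e := fun heq =>
        hi2 (by rw [← heq])
      simp only [dif_neg h, dif_pos h', Function.update_of_ne hne]
    · simp only [dif_neg h, dif_neg h']

lemma edge_flip_delta {n : ℕ} {c : ℝ} (hc : 0 < c) (ω : EdgeSpace n)
    (e : {e : Fin n × Fin n // e.1 < e.2}) :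
    ∑ i, ∑ j, |Kmat c (adjMatrix (Function.update ω e true)) i j -
      Kmat c (adjMatrix (Function.update ω e false)) i j| ≤ 4 := by
  set K := Kmat c (adjMatrix (Function.update ω e true)) with hK
  set K' := Kmat c (adjMatrix (Function.update ω e false)) with hK'
  have hKs : SubSt K := subst_K hc (adj_nonneg _)
  have hK's : SubSt K' := subst_K hc (adj_nonneg _)
  have hrow2 : ∀ i, ∑ j, |K i j - K' i j| ≤ 2 := by
    intro i
    calc ∑ j, |K i j - K' i j| ≤ ∑ j, (K i j + K' i j) := by
          refine Finset.sum_le_sum fun j _ => ?_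
          calc |K i j - K' i j| ≤ |K i j| + |K' i j| := abs_sub _ _
            _ = K i j + K' i j := by
                rw [abs_of_nonneg (hKs.1 i j), abs_of_nonneg (hK's.1 i j)]
      _ = (∑ j, K i j) + ∑ j, K' i j := Finset.sum_add_distrib
      _ ≤ 1 + 1 := add_le_add (hKs.2 i) (hK's.2 i)
      _ = 2 := by norm_num
  have hrow0 : ∀ i, i ≠ e.val.1 → i ≠ e.val.2 → ∑ j, |K i j - K' i j| = 0 := by
    intro i hi1 hi2
    refine Finset.sum_eq_zero fun j _ => ?_
    have : K i j = K' i j := by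
      simp only [hK, hK', Kmat, Matrix.of_apply]
      have h1 : ∀ l, adjMatrix (Function.update ω e true) i l =
          adjMatrix (Function.update ω e false) i l := adj_row_eq ω e hi1 hi2 true false
      rw [h1 j]
      congr 1
      exact congrArg _ (Finset.sum_congr rfl fun l _ => h1 l)
    rw [this, sub_self, abs_zero]
  have hsub : ({e.val.1, e.val.2} : Finset (Fin n)) ⊆ Finset.univ := Finset.subset_univ _
  have hne : e.val.1 ≠ e.val.2 := ne_of_lt e.prop
  have hsum : ∑ i, ∑ j, |K i j - K' i j| =
      ∑ i ∈ ({e.val.1, e.val.2} : Finset (Fin n)), ∑ j, |K i j - K' i j| := by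
    symm
    refine Finset.sum_subset hsub fun x _ hx => ?_
    simp only [Finset.mem_insert, Finset.mem_singleton, not_or] at hx
    exact hrow0 x hx.1 hx.2
  rw [hsum, Finset.sum_pair hne]
  linarith [hrow2 e.val.1, hrow2 e.val.2]

lemma bern_singleton {a : ℝ} (ha0 : 0 ≤ a) (ha1 : a ≤ 1) (b : Bool) :
    ((bernoulliMeasure a) {b}).toReal = wB a b := by
  cases b
  · have : (bernoulliMeasure a) {false} = ENNReal.ofReal (1 - a) := by
      simp [bernoulliMeasure, Measure.dirac_apply]
    rw [this, ENNReal.toReal_ofReal (by linarith)]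
    simp [wB]
  · have : (bernoulliMeasure a) {true} = ENNReal.ofReal a := by
      simp [bernoulliMeasure, Measure.dirac_apply]
    rw [this, ENNReal.toReal_ofReal ha0]
    simp [wB]

lemma bern_prob {a : ℝ} (ha0 : 0 ≤ a) (ha1 : a ≤ 1) :
    IsProbabilityMeasure (bernoulliMeasure a) := by
  constructor
  simp only [bernoulliMeasure, Measure.coe_add, Measure.coe_smul, Pi.add_apply, Pi.smul_apply,
    smul_eq_mul, measure_univ, mul_one]
  rw [← ENNReal.ofReal_add ha0 (by linarith)]
  norm_num

lemma integral_er {n : ℕ} {a : ℝ} (ha0 : 0 ≤ a) (ha1 : a ≤ 1) (f : EdgeSpace n → ℝ)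
    (hf : Integrable f (erMeasure n a)) :
    ∫ ω, f ω ∂(erMeasure n a) = ∑ τ : EdgeSpace n, (∏ e, wB a (τ e)) * f τ := by
  rw [integral_fintype hf]
  refine Finset.sum_congr rfl fun τ _ => ?_
  rw [smul_eq_mul]
  congr 1
  have hs : ({τ} : Set (EdgeSpace n)) = Set.univ.pi fun e => {τ e} :=
    (Set.univ_pi_singleton τ).symm
  rw [Measure.real, erMeasure, hs, Measure.pi_pi, ENNReal.toReal_prod]
  exact Finset.prod_congr rfl fun e _ => bern_singleton ha0 ha1 (τ e)

end Specific

end ERVar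

/-- for fixed c > 0, p > 0 and k ≥ 1 there is a constant C
(depending only on k, p, c) with Var[β_k(K_n)] ≤ C/n for all n > p, where
β_k(M) = n⁻¹ tr(M^k). -/

theorem variance_of_esd_moment_le
    (c p : ℝ) (hc : 0 < c) (hp : 0 < p) (k : ℕ) (hk : 1 ≤ k) :
    ∃ C : ℝ, ∀ n : ℕ, p < n →
      ProbabilityTheory.variance
        (fun ω : EdgeSpace n => (n : ℝ)⁻¹ * Matrix.trace ((Kmat c (adjMatrix ω)) ^ k))
        (erMeasure n (p / n))
      ≤ C / n := by
  classical
  refine ⟨16 * p * (k : ℝ) ^ 2, fun n hn => ?_⟩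
  have hn0 : (0 : ℝ) < n := lt_trans hp hn
  set a : ℝ := p / n with ha
  have ha0 : 0 ≤ a := div_nonneg hp.le hn0.le
  have ha1 : a ≤ 1 := by
    rw [ha, div_le_one hn0]
    exact hn.le
  haveI : IsProbabilityMeasure (bernoulliMeasure a) := ERVar.bern_prob ha0 ha1
  haveI : IsProbabilityMeasure (erMeasure n a) := by
    rw [erMeasure]; infer_instance
  set f : EdgeSpace n → ℝ :=
    fun ω => (n : ℝ)⁻¹ * Matrix.trace ((Kmat c (adjMatrix ω)) ^ k) with hf
  -- boundedness
  have htr : ∀ ω : EdgeSpace n, |Matrix.trace ((Kmat c (adjMatrix ω)) ^ k)| ≤ n := by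
    intro ω
    have hKs : ERVar.SubSt (Kmat c (adjMatrix ω)) := ERVar.subst_K hc (ERVar.adj_nonneg ω)
    have hPs : ERVar.SubSt ((Kmat c (adjMatrix ω)) ^ k) := ERVar.subst_pow hKs k
    calc |Matrix.trace ((Kmat c (adjMatrix ω)) ^ k)|
        ≤ ∑ i, |((Kmat c (adjMatrix ω)) ^ k) i i| := Finset.abs_sum_le_sum_abs _ _
      _ ≤ ∑ _i : Fin n, (1 : ℝ) := Finset.sum_le_sum fun i _ => by
          rw [abs_of_nonneg (hPs.1 i i)]
          exact ERVar.subst_entry_le_one hPs i i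
      _ = n := by simp
  have hfb : ∀ ω, ‖f ω‖ ≤ (n : ℝ)⁻¹ * n := by
    intro ω
    rw [Real.norm_eq_abs, hf, abs_mul, abs_of_nonneg (inv_nonneg.2 hn0.le)]
    exact mul_le_mul_of_nonneg_left (htr ω) (inv_nonneg.2 hn0.le)
  have hmeas : Measurable f := measurable_of_countable f
  have hmem : MemLp f 2 (erMeasure n a) :=
    MemLp.of_bound hmeas.aestronglyMeasurable _ (Filter.Eventually.of_forall hfb)
  have hint : Integrable f (erMeasure n a) := hmem.integrable one_le_two
  have hmem2 : MemLp (fun ω => f ω ^ 2) 1 (erMeasure n a) := by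
    refine MemLp.of_bound (hmeas.pow_const 2).aestronglyMeasurable (((n : ℝ)⁻¹ * n) ^ 2)
      (Filter.Eventually.of_forall fun ω => ?_)
    rw [Real.norm_eq_abs, abs_pow]
    have := hfb ω
    rw [Real.norm_eq_abs] at this
    exact pow_le_pow_left₀ (abs_nonneg _) this 2
  have hint2 : Integrable (fun ω => f ω ^ 2) (erMeasure n a) :=
    memLp_one_iff_integrable.1 hmem2
  -- variance as difference of sums
  rw [ProbabilityTheory.variance_eq_sub hmem]
  have hpow : ∫ x, (f ^ 2) x ∂(erMeasure n a) = ∫ x, f x ^ 2 ∂(erMeasure n a) := by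
    simp [Pi.pow_apply]
  rw [hpow]
  rw [ERVar.integral_er ha0 ha1 f hint, ERVar.integral_er ha0 ha1 _ hint2]
  -- identify with iterated averages
  set ω₀ : EdgeSpace n := fun _ => false with hω₀
  set L : List {e : Fin n × Fin n // e.1 < e.2} := (Finset.univ).toList with hL
  rw [← ERVar.Eop_univ_eq_sum a f ω₀, ← ERVar.Eop_univ_eq_sum a (fun ω => f ω ^ 2) ω₀]
  -- single edge-flip bound
  set B : ℝ := (n : ℝ)⁻¹ * (k * 4) with hB
  have hBdiff : ∀ e ∈ L, ∀ ω : EdgeSpace n,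
      |f (Function.update ω e true) - f (Function.update ω e false)| ≤ B := by
    intro e _ ω
    have hM : ERVar.SubSt (Kmat c (adjMatrix (Function.update ω e false))) :=
      ERVar.subst_K hc (ERVar.adj_nonneg _)
    have hM' : ERVar.SubSt (Kmat c (adjMatrix (Function.update ω e true))) :=
      ERVar.subst_K hc (ERVar.adj_nonneg _)
    have hδ := ERVar.edge_flip_delta hc ω e
    have htd := ERVar.trace_pow_diff_le hM hM' k hδ
    rw [hf]
    rw [← mul_sub, abs_mul, abs_of_nonneg (inv_nonneg.2 hn0.le), hB]
    exact mul_le_mul_of_nonneg_left htd (inv_nonneg.2 hn0.le)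
  have hvar := ERVar.Eop_var_le a ha0 ha1 L (Finset.univ.nodup_toList) f B hBdiff ω₀
  refine le_trans hvar ?_
  -- numerics
  have hlen : (L.length : ℝ) ≤ (n : ℝ) ^ 2 := by
    rw [hL, Finset.length_toList]
    have h1 : (Finset.univ : Finset {e : Fin n × Fin n // e.1 < e.2}).card =
        Fintype.card {e : Fin n × Fin n // e.1 < e.2} := rfl
    rw [h1]
    have h2 : Fintype.card {e : Fin n × Fin n // e.1 < e.2} ≤ Fintype.card (Fin n × Fin n) :=
      Fintype.card_subtype_le _
    have h3 : Fintype.card (Fin n × Fin n) = n * n := by simp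
    calc (Fintype.card {e : Fin n × Fin n // e.1 < e.2} : ℝ) ≤ ((n * n : ℕ) : ℝ) := by
          exact_mod_cast le_trans h2 (le_of_eq h3)
      _ = (n : ℝ) ^ 2 := by push_cast; ring
  have hq : a * (1 - a) ≤ p / n := by
    rw [ha]
    nlinarith [div_nonneg hp.le hn0.le]
  have hB2 : (0 : ℝ) ≤ B ^ 2 := sq_nonneg _
  have hlen0 : (0 : ℝ) ≤ (L.length : ℝ) := Nat.cast_nonneg _
  have hq0 : 0 ≤ a * (1 - a) := mul_nonneg ha0 (by linarith)
  calc (L.length : ℝ) * (a * (1 - a)) * B ^ 2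
      ≤ (n : ℝ) ^ 2 * (p / n) * B ^ 2 := by
        refine mul_le_mul (mul_le_mul hlen hq hq0 (by positivity)) le_rfl hB2 ?_
        positivity
    _ = 16 * p * (k : ℝ) ^ 2 / n := by
        rw [hB]
        field_simp
        ring
end

section
/- Fix p > 0 and an integer k ≥ 0. For n > p let G be a random graph following G(n, p/n) and let s be a fixed vertex. Then the expected number of vertices u whose graph distance from s in G is at most k satisfies E|{u : dist_G(s,u) ≤ k}| ≤ 1 + p + p² + … + p^k. -/
open MeasureTheory Filter

/-- The Erdős–Rényi random graph determined by a point of the sample space. -/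
def erGraph {n : ℕ} (ω : EdgeSpace n) : SimpleGraph (Fin n) :=
  SimpleGraph.fromRel (fun i j => ∃ h : i < j, ω ⟨(i, j), h⟩ = true)

section Aux
open MeasureTheory Finset

lemma getVert_injOn' {V : Type*} {G : SimpleGraph V} {u v : V} {p : G.Walk u v} (hp : p.IsPath) :
    ∀ i ≤ p.length, ∀ j ≤ p.length, p.getVert i = p.getVert j → i = j := by
  induction p with
  | nil => intro i hi j hj _; simp_all
  | cons h q ih =>
    rw [SimpleGraph.Walk.cons_isPath_iff] at hp
    intro i hi j hj hij
    match i, j with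
    | 0, 0 => rfl
    | 0, j+1 =>
      exfalso
      apply hp.2
      rw [SimpleGraph.Walk.mem_support_iff_exists_getVert]
      refine ⟨j, ?_, by simpa using hj⟩
      simpa [SimpleGraph.Walk.getVert_cons_succ] using hij.symm
    | i+1, 0 =>
      exfalso
      apply hp.2
      rw [SimpleGraph.Walk.mem_support_iff_exists_getVert]
      refine ⟨i, ?_, by simpa using hi⟩
      simpa [SimpleGraph.Walk.getVert_cons_succ] using hij
    | i+1, j+1 =>
      have := ih hp.1 i (by simpa using hi) j (by simpa using hj)
        (by simpa [SimpleGraph.Walk.getVert_cons_succ] using hij)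
      omega

lemma bernoulli_singleton (a : ℝ) (x : Bool) :
    bernoulliMeasure a {x} = ENNReal.ofReal (if x then a else 1 - a) := by
  cases x <;> simp [bernoulliMeasure, Measure.dirac_apply]

lemma erMeasure_singleton {n : ℕ} (a : ℝ) (ω : EdgeSpace n) :
    erMeasure n a {ω} = ∏ e, ENNReal.ofReal (if ω e then a else 1 - a) := by
  rw [erMeasure, ← Set.univ_pi_singleton, Measure.pi_pi]
  simp [bernoulli_singleton]

lemma weight_toReal {n : ℕ} {a : ℝ} (h0 : 0 ≤ a) (h1 : a ≤ 1) (ω : EdgeSpace n) :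
    (erMeasure n a {ω}).toReal = ∏ e, (if ω e then a else 1 - a) := by
  rw [erMeasure_singleton, ENNReal.toReal_prod]
  refine Finset.prod_congr rfl fun e _ => ?_
  rcases Bool.dichotomy (ω e) with h | h <;> rw [h] <;> simp [ENNReal.toReal_ofReal, h0, sub_nonneg.2 h1]

lemma sum_weight_event {n : ℕ} {a : ℝ} (h0 : 0 ≤ a) (h1 : a ≤ 1)
    (S : Finset {e : Fin n × Fin n // e.1 < e.2}) :
    ∑ ω : EdgeSpace n,
      ((∏ e, (if ω e then a else 1 - a)) * ∏ e ∈ S, (if ω e then (1:ℝ) else 0))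
      = a ^ S.card := by
  classical
  have key : ∀ ω : EdgeSpace n,
      (∏ e, (if ω e then a else 1 - a)) * (∏ e ∈ S, (if ω e then (1:ℝ) else 0))
      = ∏ e : {e : Fin n × Fin n // e.1 < e.2},
          ((if ω e then a else 1 - a) * (if e ∈ S then (if ω e then (1:ℝ) else 0) else 1)) := by
    intro ω
    rw [Finset.prod_mul_distrib]
    congr 1
    rw [Finset.prod_ite_mem, Finset.univ_inter]
  simp only [key]
  have := Finset.prod_univ_sum (κ := fun _ : {e : Fin n × Fin n // e.1 < e.2} => Bool)
    (fun _ => (Finset.univ : Finset Bool))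
    (fun e x => (if x then a else 1 - a) * (if e ∈ S then (if x then (1:ℝ) else 0) else 1))
  rw [Fintype.piFinset_univ] at this
  rw [← this]
  have h2 : ∀ e : {e : Fin n × Fin n // e.1 < e.2},
      (∑ x : Bool, (if x then a else 1 - a) * (if e ∈ S then (if x then (1:ℝ) else 0) else 1))
      = if e ∈ S then a else 1 := by
    intro e
    rw [Fintype.sum_bool]
    by_cases h : e ∈ S <;> simp [h] <;> ring
  rw [Finset.prod_congr rfl fun e _ => h2 e, Finset.prod_ite_mem, Finset.univ_inter,
    Finset.prod_const]


open scoped Classical in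
lemma pointwise_bound {n : ℕ} (s : Fin n) (k : ℕ) (G : SimpleGraph (Fin n)) :
    ((Set.ncard {u : Fin n | G.Reachable s u ∧ G.dist s u ≤ k}) : ℝ)
      ≤ ∑ i ∈ Finset.range (k+1),
          ((Finset.univ.filter (fun v : Fin (i+1) → Fin n =>
            v 0 = s ∧ Function.Injective v ∧
            ∀ j : Fin i, G.Adj (v j.castSucc) (v j.succ))).card : ℝ) := by
  set S := {u : Fin n | G.Reachable s u ∧ G.dist s u ≤ k} with hS
  set T : (i : ℕ) → Finset (Fin (i+1) → Fin n) := fun i =>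
    Finset.univ.filter (fun v : Fin (i+1) → Fin n =>
      v 0 = s ∧ Function.Injective v ∧
      ∀ j : Fin i, G.Adj (v j.castSucc) (v j.succ)) with hT
  set Φ : Fin n → Σ i : ℕ, (Fin (i+1) → Fin n) := fun u =>
    if h : G.Reachable s u then
      ⟨G.dist s u, fun j => (Classical.choose h.exists_path_of_dist).getVert j⟩
    else ⟨0, fun _ => u⟩ with hΦ
  have hlast : ∀ u ∈ S, (Φ u).2 (Fin.last (Φ u).1) = u := by
    intro u hu
    have hr : G.Reachable s u := hu.1
    have hsp := Classical.choose_spec hr.exists_path_of_dist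
    have hΦu : Φ u = ⟨G.dist s u,
        fun j => (Classical.choose hr.exists_path_of_dist).getVert ↑j⟩ := dif_pos hr
    rw [hΦu]
    simp only [Fin.val_last]
    have hgl := SimpleGraph.Walk.getVert_length (Classical.choose hr.exists_path_of_dist)
    rwa [hsp.2] at hgl
  have hinj : Set.InjOn Φ S := by
    intro u hu u' hu' h
    rw [← hlast u hu, ← hlast u' hu', h]
  have hmem : ∀ u ∈ S, Φ u ∈ (Finset.range (k+1)).sigma T := by
    intro u hu
    have hr : G.Reachable s u := hu.1
    have hsp := Classical.choose_spec hr.exists_path_of_dist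
    set p := Classical.choose hr.exists_path_of_dist with hpdef
    have hΦu : Φ u = ⟨G.dist s u, fun j => p.getVert ↑j⟩ := dif_pos hr
    rw [Finset.mem_sigma, hΦu]
    constructor
    · exact Finset.mem_range.2 (Nat.lt_succ_of_le hu.2)
    · rw [hT]
      simp only [Finset.mem_filter, Finset.mem_univ, true_and]
      refine ⟨?_, ?_, ?_⟩
      · show p.getVert ((0 : Fin (G.dist s u + 1)) : ℕ) = s
        simp [SimpleGraph.Walk.getVert_zero]
      · intro j j' hjj'
        have h1 : (j : ℕ) ≤ p.length := by rw [hsp.2]; exact Nat.lt_succ_iff.1 j.isLt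
        have h2 : (j' : ℕ) ≤ p.length := by rw [hsp.2]; exact Nat.lt_succ_iff.1 j'.isLt
        exact Fin.ext (getVert_injOn' hsp.1 _ h1 _ h2 hjj')
      · intro j
        have hjl : (j : ℕ) < p.length := by rw [hsp.2]; exact j.isLt
        have := SimpleGraph.Walk.adj_getVert_succ p hjl
        simpa [Fin.coe_castSucc, Fin.val_succ] using this
  calc ((Set.ncard S : ℕ) : ℝ) = ((Φ '' S).ncard : ℝ) := by
        rw [Set.ncard_image_of_injOn hinj]
    _ ≤ ((((Finset.range (k+1)).sigma T : Finset _) : Set (Σ i : ℕ, (Fin (i+1) → Fin n))).ncard : ℝ) := by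
        exact_mod_cast Set.ncard_le_ncard
          (by rintro x ⟨u, hu, rfl⟩; exact hmem u hu) (Finset.finite_toSet _)
    _ = ((((Finset.range (k+1)).sigma T).card : ℕ) : ℝ) := by rw [Set.ncard_coe_finset]
    _ = ∑ i ∈ Finset.range (k+1), ((T i).card : ℝ) := by
        rw [Finset.card_sigma]; push_cast; rfl

open scoped Classical in
lemma step4 {n : ℕ} {a : ℝ} (h0 : 0 ≤ a) (h1 : a ≤ 1) (s : Fin n) (i : ℕ) :
    ∑ ω : EdgeSpace n, (∏ e, (if ω e then a else 1 - a)) *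
      ((Finset.univ.filter (fun v : Fin (i+1) → Fin n =>
          v 0 = s ∧ Function.Injective v ∧
          ∀ j : Fin i, (erGraph ω).Adj (v j.castSucc) (v j.succ))).card : ℝ)
      ≤ (n : ℝ) ^ i * a ^ i := by
  have hwnn : ∀ ω : EdgeSpace n, 0 ≤ ∏ e, (if ω e then a else 1 - a) := by
    intro ω
    refine Finset.prod_nonneg fun e _ => ?_
    split_ifs
    · exact h0
    · linarith
  -- rewrite card as a sum of indicators
  have hcard : ∀ ω : EdgeSpace n,
      (((Finset.univ.filter (fun v : Fin (i+1) → Fin n =>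
          v 0 = s ∧ Function.Injective v ∧
          ∀ j : Fin i, (erGraph ω).Adj (v j.castSucc) (v j.succ))).card : ℕ) : ℝ)
      = ∑ v : Fin (i+1) → Fin n,
          if (v 0 = s ∧ Function.Injective v) then
            (if (∀ j : Fin i, (erGraph ω).Adj (v j.castSucc) (v j.succ)) then (1:ℝ) else 0)
          else 0 := by
    intro ω
    rw [Finset.card_filter]
    push_cast
    refine Finset.sum_congr rfl fun v _ => ?_
    by_cases h1 : v 0 = s ∧ Function.Injective v
    · by_cases h2 : ∀ j : Fin i, (erGraph ω).Adj (v j.castSucc) (v j.succ)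
      · simp [h1.1, h1.2, h2]
      · simp [h2]
    · simp only [if_neg h1]
      rw [if_neg]
      tauto
  calc ∑ ω : EdgeSpace n, (∏ e, (if ω e then a else 1 - a)) * _
      = ∑ v ∈ Finset.univ.filter
            (fun v : Fin (i+1) → Fin n => v 0 = s ∧ Function.Injective v),
          ∑ ω : EdgeSpace n, (∏ e, (if ω e then a else 1 - a)) *
            (if (∀ j : Fin i, (erGraph ω).Adj (v j.castSucc) (v j.succ)) then (1:ℝ) else 0) := by
        simp only [hcard, Finset.mul_sum]
        rw [Finset.sum_comm]
        rw [← Finset.sum_filter_add_sum_filter_not Finset.univ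
          (fun v : Fin (i+1) → Fin n => v 0 = s ∧ Function.Injective v)]
        have : ∀ v ∈ Finset.univ.filter
            (fun v : Fin (i+1) → Fin n => ¬(v 0 = s ∧ Function.Injective v)),
            ∑ ω : EdgeSpace n, (∏ e, (if ω e then a else 1 - a)) *
              (if (v 0 = s ∧ Function.Injective v) then
                (if (∀ j : Fin i, (erGraph ω).Adj (v j.castSucc) (v j.succ)) then (1:ℝ) else 0)
              else 0) = 0 := by
          intro v hv
          rw [Finset.mem_filter] at hv
          simp [hv.2]
        rw [Finset.sum_congr rfl this, Finset.sum_const, smul_zero, add_zero]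
        refine Finset.sum_congr rfl fun v hv => ?_
        rw [Finset.mem_filter] at hv
        refine Finset.sum_congr rfl fun ω _ => ?_
        rw [if_pos hv.2]
    _ ≤ ∑ v ∈ Finset.univ.filter
            (fun v : Fin (i+1) → Fin n => v 0 = s ∧ Function.Injective v), a ^ i := by
        refine Finset.sum_le_sum fun v hv => ?_
        rw [Finset.mem_filter] at hv
        have hv0 := hv.2.1
        have hvinj := hv.2.2
        -- construct the edge map
        have hne : ∀ j : Fin i, v j.castSucc ≠ v j.succ := by
          intro j h
          exact absurd (hvinj h) (show j.castSucc < j.succ from Fin.castSucc_lt_succ).ne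
        set E : Fin i → {e : Fin n × Fin n // e.1 < e.2} := fun j =>
          if h : v j.castSucc < v j.succ then ⟨(v j.castSucc, v j.succ), h⟩
          else ⟨(v j.succ, v j.castSucc), lt_of_le_of_ne (not_lt.1 h) (hne j).symm⟩ with hE
        have hEval : ∀ j : Fin i, ((E j).1.1 = v j.castSucc ∧ (E j).1.2 = v j.succ) ∨
            ((E j).1.1 = v j.succ ∧ (E j).1.2 = v j.castSucc) := by
          intro j
          rw [hE]
          beta_reduce
          split_ifs with h
          · exact Or.inl ⟨rfl, rfl⟩
          · exact Or.inr ⟨rfl, rfl⟩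
        have hEinj : Function.Injective E := by
          intro j j' h
          have hj := hEval j
          have hj' := hEval j'
          have h1 : (E j).1.1 = (E j').1.1 := by rw [h]
          have h2 : (E j).1.2 = (E j').1.2 := by rw [h]
          have hcs : Function.Injective (fun j : Fin (i+1) => (j : ℕ)) := Fin.val_injective
          rcases hj with ⟨ha1, ha2⟩ | ⟨ha1, ha2⟩ <;> rcases hj' with ⟨hb1, hb2⟩ | ⟨hb1, hb2⟩ <;>
            [skip; skip; skip; skip] <;>
          · rw [ha1, hb1] at h1
            rw [ha2, hb2] at h2
            have e1 := hvinj h1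
            have e2 := hvinj h2
            first
            | (exact Fin.succ_injective _ (by
                have := congrArg Fin.val e1
                have := congrArg Fin.val e2
                ext
                omega))
            | (ext
               have c1 := congrArg Fin.val e1
               have c2 := congrArg Fin.val e2
               simp [Fin.coe_castSucc, Fin.val_succ] at c1 c2 ⊢
               omega)
        -- adjacency implies edges on
        have hadj : ∀ ω : EdgeSpace n,
            (∀ j : Fin i, (erGraph ω).Adj (v j.castSucc) (v j.succ)) →
            ∀ j : Fin i, ω (E j) = true := by
          intro ω hωadj j
          have := hωadj j
          rw [erGraph, SimpleGraph.fromRel_adj] at this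
          obtain ⟨hne', h | h⟩ := this
          · obtain ⟨hlt, hω⟩ := h
            have : E j = ⟨(v j.castSucc, v j.succ), hlt⟩ := by rw [hE]; simp [hlt]
            rw [this]; exact hω
          · obtain ⟨hlt, hω⟩ := h
            have : E j = ⟨(v j.succ, v j.castSucc), hlt⟩ := by
              rw [hE]
              have : ¬ (v j.castSucc < v j.succ) := not_lt.2 hlt.le
              simp [this]
            rw [this]; exact hω
        calc ∑ ω : EdgeSpace n, (∏ e, (if ω e then a else 1 - a)) *
              (if (∀ j : Fin i, (erGraph ω).Adj (v j.castSucc) (v j.succ)) then (1:ℝ) else 0)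
            ≤ ∑ ω : EdgeSpace n, (∏ e, (if ω e then a else 1 - a)) *
              ∏ e ∈ Finset.univ.image E, (if ω e then (1:ℝ) else 0) := by
              refine Finset.sum_le_sum fun ω _ => ?_
              refine mul_le_mul_of_nonneg_left ?_ (hwnn ω)
              by_cases h : ∀ j : Fin i, (erGraph ω).Adj (v j.castSucc) (v j.succ)
              · rw [if_pos h]
                have : ∀ e ∈ Finset.univ.image E, (if ω e then (1:ℝ) else 0) = 1 := by
                  intro e he
                  rw [Finset.mem_image] at he
                  obtain ⟨j, -, rfl⟩ := he
                  rw [hadj ω h j]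
                  simp
                rw [Finset.prod_congr rfl this, Finset.prod_const_one]
              · rw [if_neg h]
                refine Finset.prod_nonneg fun e _ => ?_
                split_ifs <;> norm_num
          _ = a ^ (Finset.univ.image E).card := sum_weight_event h0 h1 _
          _ = a ^ i := by
              rw [Finset.card_image_of_injective _ hEinj, Finset.card_univ, Fintype.card_fin]
    _ ≤ (n : ℝ) ^ i * a ^ i := by
        rw [Finset.sum_const, nsmul_eq_mul]
        refine mul_le_mul_of_nonneg_right ?_ (pow_nonneg h0 i)
        have hcle : (Finset.univ.filter
            (fun v : Fin (i+1) → Fin n => v 0 = s ∧ Function.Injective v)).card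
            ≤ (Finset.univ : Finset (Fin i → Fin n)).card := by
          refine Finset.card_le_card_of_injOn (fun v => v ∘ Fin.succ)
            (fun _ _ => Finset.mem_univ _) ?_
          intro v hv v' hv' h
          rw [Finset.coe_filter] at hv hv'
          funext j
          refine Fin.cases ?_ ?_ j
          · rw [hv.2.1, hv'.2.1]
          · intro j'
            exact congrFun h j'
        calc ((Finset.univ.filter (fun v : Fin (i+1) → Fin n =>
                v 0 = s ∧ Function.Injective v)).card : ℝ)
            ≤ ((Finset.univ : Finset (Fin i → Fin n)).card : ℝ) := by exact_mod_cast hcle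
          _ = (n : ℝ) ^ i := by
              rw [Finset.card_univ, Fintype.card_fun]
              push_cast
              simp

end Aux

open MeasureTheory in

set_option maxHeartbeats 1000000 in
set_option synthInstance.maxHeartbeats 1000000 in
/-- for G ~ G(n, p/n) with n > p and any fixed vertex s and k ≥ 0,
E |{u : dist_G(s,u) ≤ k}| ≤ 1 + p + ⋯ + p^k. -/
theorem expected_ball_size_le_geometric_sum
    (p : ℝ) (hp : 0 < p) (k : ℕ) :
    ∀ n : ℕ, p < n → ∀ s : Fin n,
      (∫ ω, ((Set.ncard {u : Fin n |
          (erGraph ω).Reachable s u ∧ (erGraph ω).dist s u ≤ k}) : ℝ)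
        ∂(erMeasure n (p / n)))
      ≤ ∑ i ∈ Finset.range (k + 1), p ^ i := by
  intro n hn s
  classical
  have hn0 : (0:ℝ) < n := lt_trans hp hn
  have ha0 : 0 ≤ p / n := div_nonneg hp.le hn0.le
  have ha1 : p / n ≤ 1 := (div_le_one hn0).2 hn.le
  haveI hfin : IsFiniteMeasure (erMeasure n (p / n)) := by
    unfold erMeasure; infer_instance
  have hwnn : ∀ ω : EdgeSpace n, 0 ≤ ∏ e, (if ω e then p / n else 1 - p / n) := by
    intro ω
    refine Finset.prod_nonneg fun e _ => ?_
    split_ifs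
    · exact ha0
    · linarith
  rw [integral_fintype _]
  simp only [Measure.real]
  have hW : ∀ ω : EdgeSpace n,
      (erMeasure n (p / n) {ω}).toReal
        • ((Set.ncard {u : Fin n |
            (erGraph ω).Reachable s u ∧ (erGraph ω).dist s u ≤ k}) : ℝ)
      = (∏ e, (if ω e then p / n else 1 - p / n)) *
          ((Set.ncard {u : Fin n |
            (erGraph ω).Reachable s u ∧ (erGraph ω).dist s u ≤ k}) : ℝ) := by
    intro ω
    rw [smul_eq_mul, weight_toReal ha0 ha1]
  rw [Finset.sum_congr rfl fun ω _ => hW ω]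
  refine le_trans (Finset.sum_le_sum fun ω _ =>
    mul_le_mul_of_nonneg_left (pointwise_bound s k (erGraph ω)) (hwnn ω)) ?_
  simp only [Finset.mul_sum]
  rw [Finset.sum_comm]
  refine le_trans (Finset.sum_le_sum fun i _ => step4 ha0 ha1 s i) ?_
  refine le_of_eq (Finset.sum_congr rfl fun i _ => ?_)
  rw [← mul_pow, mul_div_cancel₀ _ (ne_of_gt hn0)]
  exact Integrable.of_finite
end

section
/- Let c > 0 and let A be the adjacency matrix of any simple graph on n ≥ 2 vertices. Let D be the diagonal matrix with diagonal c·1_n + A·1_n, J the n×n matrix all of whose entries are 1/n, M = D^{-1}(cJ + A), and K = D^{-1}A. Then all eigenvalues of M and of K are real, and when both spectra are listed in increasing order (with multiplicity) as λ_1(K) ≤ … ≤ λ_n(K) and λ_1(M) ≤ … ≤ λ_n(M), one has λ_i(K) ≤ λ_i(M) ≤ λ_{i+1}(K) for every 1 ≤ i ≤ n−1. -/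
open Matrix Polynomial Module Submodule

section Aux

lemma charpoly_of_intertwine' {n : ℕ} {R : Type*} [CommRing R] [IsDomain R]
    (E K S : Matrix (Fin n) (Fin n) R) (hdet : E.det ≠ 0)
    (h : E * K = S * E) : K.charpoly = S.charpoly := by
  have key : (E.map C) * K.charmatrix = S.charmatrix * (E.map C) := by
    rw [charmatrix, charmatrix, mul_sub, sub_mul]
    congr 1
    · show E.map C * Matrix.scalar (Fin n) X = Matrix.scalar (Fin n) X * E.map C
      rw [Matrix.scalar_commute X (fun r => Commute.all X r) (E.map C)]
    · show E.map C * K.map C = S.map C * E.map C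
      rw [← Matrix.map_mul, ← Matrix.map_mul, h]
  have h2 := congrArg Matrix.det key
  rw [det_mul, det_mul] at h2
  have hE : (E.map C).det ≠ 0 := by
    have : (C : R →+* R[X]) E.det = (E.map C).det := RingHom.map_det _ _
    rw [← this]
    simpa using hdet
  rw [charpoly, charpoly]
  rw [mul_comm] at h2
  exact mul_right_cancel₀ hE h2

lemma charpoly_diagonal'' {n : ℕ} {R : Type*} [CommRing R] (d : Fin n → R) :
    (Matrix.diagonal d).charpoly = ∏ i, (X - C (d i)) := by
  rw [charpoly]
  have : (Matrix.diagonal d).charmatrix = Matrix.diagonal (fun i => X - C (d i)) := by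
    ext i j
    by_cases hij : i = j <;> simp [charmatrix_apply, hij, Matrix.diagonal, Matrix.one_apply]
  rw [this, det_diagonal]

lemma charpoly_hermitian' {n : ℕ} {S : Matrix (Fin n) (Fin n) ℝ} (hS : S.IsHermitian) :
    S.charpoly = ∏ i, (X - C (hS.eigenvalues i)) := by
  have hU := hS.spectral_theorem
  set U : Matrix (Fin n) (Fin n) ℝ := (hS.eigenvectorUnitary : Matrix (Fin n) (Fin n) ℝ) with hUdef
  have hUU : U * star U = 1 := (Matrix.mem_unitaryGroup_iff).mp hS.eigenvectorUnitary.2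
  have hSU : S * U = U * Matrix.diagonal (RCLike.ofReal ∘ hS.eigenvalues) := by
    conv_lhs => rw [hU, Unitary.conjStarAlgAut_apply]
    rw [mul_assoc, mul_assoc]
    rw [(Matrix.mem_unitaryGroup_iff').mp hS.eigenvectorUnitary.2, mul_one]
  have hdet : U.det ≠ 0 := by
    have := congrArg Matrix.det hUU
    rw [det_mul, det_one] at this
    exact left_ne_zero_of_mul_eq_one this
  have := charpoly_of_intertwine' U (Matrix.diagonal (RCLike.ofReal ∘ hS.eigenvalues)) S hdet hSU.symm
  rw [this.symm, charpoly_diagonal'']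
  simp

variable {n : ℕ} {B : Matrix (Fin n) (Fin n) ℝ} (hB : B.IsHermitian)

lemma inner_eq_dot (x y : EuclideanSpace ℝ (Fin n)) :
    (inner ℝ x y : ℝ) = (x : Fin n → ℝ) ⬝ᵥ (y : Fin n → ℝ) := by
  simp [PiLp.inner_apply, dotProduct, mul_comm]

lemma repr_mulVec (x : EuclideanSpace ℝ (Fin n)) (j : Fin n) :
    hB.eigenvectorBasis.repr (WithLp.toLp 2 (B *ᵥ x : Fin n → ℝ)) j
      = hB.eigenvalues j * hB.eigenvectorBasis.repr x j := by
  rw [OrthonormalBasis.repr_apply_apply, OrthonormalBasis.repr_apply_apply]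
  rw [inner_eq_dot, inner_eq_dot, WithLp.ofLp_toLp]
  have hBt : Bᵀ = B := by
    have := hB.eq; rwa [Matrix.conjTranspose_eq_transpose_of_trivial] at this
  have h1 : (hB.eigenvectorBasis j : Fin n → ℝ) ⬝ᵥ (B *ᵥ x)
      = (B *ᵥ ⇑(hB.eigenvectorBasis j)) ⬝ᵥ x := by
    rw [Matrix.dotProduct_mulVec, ← Matrix.mulVec_transpose, hBt]
  rw [h1, hB.mulVec_eigenvectorBasis]
  simp only [smul_dotProduct, smul_eq_mul]

lemma quad_eq_sum (x : EuclideanSpace ℝ (Fin n)) :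
    (x : Fin n → ℝ) ⬝ᵥ (B *ᵥ x)
      = ∑ j, hB.eigenvalues j * (hB.eigenvectorBasis.repr x j)^2 := by
  show x.ofLp ⬝ᵥ (WithLp.toLp 2 (B *ᵥ x.ofLp)).ofLp = _
  rw [← inner_eq_dot x (WithLp.toLp 2 (B *ᵥ x : Fin n → ℝ))]
  rw [← hB.eigenvectorBasis.repr.inner_map_map x (WithLp.toLp 2 (B *ᵥ x : Fin n → ℝ))]
  rw [inner_eq_dot]
  unfold dotProduct
  refine Finset.sum_congr rfl fun j _ => ?_
  rw [repr_mulVec hB x j]; ring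

lemma norm_eq_sum (x : EuclideanSpace ℝ (Fin n)) :
    (x : Fin n → ℝ) ⬝ᵥ (x : Fin n → ℝ) = ∑ j, (hB.eigenvectorBasis.repr x j)^2 := by
  rw [← inner_eq_dot x x, ← hB.eigenvectorBasis.repr.inner_map_map x x, inner_eq_dot]
  unfold dotProduct
  exact Finset.sum_congr rfl fun j _ => (sq _).symm

lemma mem_span_repr_vanish (s : Set (Fin n)) (x : EuclideanSpace ℝ (Fin n))
    (hx : x ∈ Submodule.span ℝ (⇑hB.eigenvectorBasis '' s)) :
    ∀ j ∉ s, hB.eigenvectorBasis.repr x j = 0 := by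
  intro j hj
  rw [← OrthonormalBasis.coe_toBasis] at hx
  have hsup := (Basis.mem_span_image _).mp hx
  have : hB.eigenvectorBasis.toBasis.repr x j = 0 := by
    by_contra h
    exact hj (hsup (Finsupp.mem_support_iff.mpr h))
  rwa [OrthonormalBasis.coe_toBasis_repr_apply] at this

lemma quad_ge (σ : Equiv.Perm (Fin n)) (hmono : Monotone (hB.eigenvalues ∘ σ)) (k : Fin n)
    (x : EuclideanSpace ℝ (Fin n))
    (hx : x ∈ Submodule.span ℝ (⇑hB.eigenvectorBasis '' (σ '' {j | k ≤ j}))) :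
    hB.eigenvalues (σ k) * ((x : Fin n → ℝ) ⬝ᵥ (x : Fin n → ℝ))
      ≤ (x : Fin n → ℝ) ⬝ᵥ (B *ᵥ x) := by
  have hv := mem_span_repr_vanish hB _ x hx
  rw [quad_eq_sum hB, norm_eq_sum hB, Finset.mul_sum]
  refine Finset.sum_le_sum fun j _ => ?_
  by_cases hj : hB.eigenvectorBasis.repr x j = 0
  · simp [hj]
  · have hmem : j ∈ σ '' {j | k ≤ j} := by
      by_contra h; exact hj (hv j h)
    obtain ⟨j', hj', rfl⟩ := hmem
    exact mul_le_mul_of_nonneg_right (hmono hj') (sq_nonneg _)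

lemma quad_le (σ : Equiv.Perm (Fin n)) (hmono : Monotone (hB.eigenvalues ∘ σ)) (k : Fin n)
    (x : EuclideanSpace ℝ (Fin n))
    (hx : x ∈ Submodule.span ℝ (⇑hB.eigenvectorBasis '' (σ '' {j | j ≤ k}))) :
    (x : Fin n → ℝ) ⬝ᵥ (B *ᵥ x)
      ≤ hB.eigenvalues (σ k) * ((x : Fin n → ℝ) ⬝ᵥ (x : Fin n → ℝ)) := by
  have hv := mem_span_repr_vanish hB _ x hx
  rw [quad_eq_sum hB, norm_eq_sum hB, Finset.mul_sum]
  refine Finset.sum_le_sum fun j _ => ?_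
  by_cases hj : hB.eigenvectorBasis.repr x j = 0
  · simp [hj]
  · have hmem : j ∈ σ '' {j | j ≤ k} := by
      by_contra h; exact hj (hv j h)
    obtain ⟨j', hj', rfl⟩ := hmem
    exact mul_le_mul_of_nonneg_right (hmono hj') (sq_nonneg _)

lemma finrank_span_basis_image (t : Finset (Fin n)) :
    Module.finrank ℝ (Submodule.span ℝ (⇑hB.eigenvectorBasis '' ↑t)) = t.card := by
  have hli : LinearIndependent ℝ (fun j : ↥t => hB.eigenvectorBasis j) := by
    have := hB.eigenvectorBasis.toBasis.linearIndependent
    rw [OrthonormalBasis.coe_toBasis] at this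
    exact this.comp _ Subtype.val_injective
  have h2 := finrank_span_eq_card hli
  have h3 : Set.range (fun j : ↥t => hB.eigenvectorBasis j) = ⇑hB.eigenvectorBasis '' ↑t := by
    ext y; simp
  rwa [h3, Fintype.card_coe] at h2

lemma exists_ne_zero_mem_inf (W U : Submodule ℝ (EuclideanSpace ℝ (Fin n)))
    (h : n < Module.finrank ℝ W + Module.finrank ℝ U) :
    ∃ x : EuclideanSpace ℝ (Fin n), x ∈ W ⊓ U ∧ x ≠ 0 := by
  have hsum := Submodule.finrank_sup_add_finrank_inf_eq W U
  have hle : Module.finrank ℝ (W ⊔ U : Submodule ℝ (EuclideanSpace ℝ (Fin n))) ≤ n := by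
    have := Submodule.finrank_le (W ⊔ U)
    rwa [finrank_euclideanSpace, Fintype.card_fin] at this
  have hpos : 0 < Module.finrank ℝ (W ⊓ U : Submodule ℝ (EuclideanSpace ℝ (Fin n))) := by omega
  have : Nontrivial (W ⊓ U : Submodule ℝ (EuclideanSpace ℝ (Fin n))) :=
    Module.nontrivial_of_finrank_pos hpos
  obtain ⟨⟨x, hx⟩, hne⟩ := exists_ne (0 : (W ⊓ U : Submodule ℝ (EuclideanSpace ℝ (Fin n))))
  exact ⟨x, hx, fun h0 => hne (Subtype.ext h0)⟩

end Aux

open Polynomial in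
/-- for the adjacency matrix A of a simple graph on n ≥ 2 vertices
and c > 0, the matrices K = D⁻¹A and M = D⁻¹(cJ+A) have real eigenvalues, and
the increasingly sorted eigenvalues interlace: λ_i(K) ≤ λ_i(M) ≤ λ_{i+1}(K) for
all 1 ≤ i ≤ n−1. -/
theorem eigenvalue_interlacing_K_M
    (c : ℝ) (hc : 0 < c) (n : ℕ) (hn : 2 ≤ n)
    (A : Matrix (Fin n) (Fin n) ℝ)
    (h01 : ∀ i j, A i j = 0 ∨ A i j = 1)
    (hsym : A.IsSymm) (hdiag : ∀ i, A i i = 0) :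
    ∃ lamK lamM : Fin n → ℝ,
      Monotone lamK ∧ Monotone lamM ∧
      ((Kmat c A).map Complex.ofReal).charpoly
        = ∏ i : Fin n, (X - C (Complex.ofReal (lamK i))) ∧
      ((Mmat c A).map Complex.ofReal).charpoly
        = ∏ i : Fin n, (X - C (Complex.ofReal (lamM i))) ∧
      ∀ (i : ℕ) (hi : i + 1 < n),
        lamK ⟨i, Nat.lt_of_succ_lt hi⟩ ≤ lamM ⟨i, Nat.lt_of_succ_lt hi⟩ ∧
        lamM ⟨i, Nat.lt_of_succ_lt hi⟩ ≤ lamK ⟨i + 1, hi⟩ := by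
  classical
  -- basic positivity
  set d : Fin n → ℝ := fun i => c + ∑ l, A i l with hd_def
  have hA0 : ∀ i j, 0 ≤ A i j := fun i j => by rcases h01 i j with h | h <;> simp [h]
  have hd : ∀ i, 0 < d i := fun i =>
    add_pos_of_pos_of_nonneg hc (Finset.sum_nonneg fun l _ => hA0 i l)
  set s : Fin n → ℝ := fun i => Real.sqrt (d i) with hs_def
  have hs : ∀ i, 0 < s i := fun i => Real.sqrt_pos.mpr (hd i)
  have hs2 : ∀ i, s i * s i = d i := fun i => Real.mul_self_sqrt (hd i).le
  set S : Matrix (Fin n) (Fin n) ℝ := Matrix.of fun i j => A i j / (s i * s j) with hS_def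
  set T : Matrix (Fin n) (Fin n) ℝ :=
    Matrix.of fun i j => (c / n + A i j) / (s i * s j) with hT_def
  have hS : S.IsHermitian := by
    ext i j
    simp only [conjTranspose_apply, hS_def, of_apply, star_trivial]
    rw [hsym.apply j i]; ring_nf
  have hT : T.IsHermitian := by
    ext i j
    simp only [conjTranspose_apply, hT_def, of_apply, star_trivial]
    rw [hsym.apply j i]; ring_nf
  -- similarity: diagonal s * Kmat = S * diagonal s  and same for Mmat/T
  have hdetE : (Matrix.diagonal s).det ≠ 0 := by
    rw [det_diagonal]
    exact Finset.prod_ne_zero_iff.mpr fun i _ => (hs i).ne'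
  have hKS : Matrix.diagonal s * Kmat c A = S * Matrix.diagonal s := by
    ext i j
    rw [Matrix.diagonal_mul, Matrix.mul_diagonal]
    show s i * (A i j / d i) = A i j / (s i * s j) * s j
    rw [← hs2 i]
    field_simp [(hs i).ne', (hs j).ne']
  have hMT : Matrix.diagonal s * Mmat c A = T * Matrix.diagonal s := by
    ext i j
    rw [Matrix.diagonal_mul, Matrix.mul_diagonal]
    show s i * ((c / n + A i j) / d i) = (c / n + A i j) / (s i * s j) * s j
    rw [← hs2 i]
    field_simp [(hs i).ne', (hs j).ne']
  have hcpK : (Kmat c A).charpoly = S.charpoly := charpoly_of_intertwine' _ _ _ hdetE hKS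
  have hcpM : (Mmat c A).charpoly = T.charpoly := charpoly_of_intertwine' _ _ _ hdetE hMT
  -- sorted eigenvalues
  set σS : Equiv.Perm (Fin n) := Tuple.sort hS.eigenvalues with hσS_def
  set σT : Equiv.Perm (Fin n) := Tuple.sort hT.eigenvalues with hσT_def
  refine ⟨hS.eigenvalues ∘ σS, hT.eigenvalues ∘ σT,
    Tuple.monotone_sort _, Tuple.monotone_sort _, ?_, ?_, ?_⟩
  · -- charpoly of K
    have : (Kmat c A).map Complex.ofReal = (Kmat c A).map (Complex.ofRealHom : ℝ →+* ℂ) := rfl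
    rw [this, Matrix.charpoly_map, hcpK, charpoly_hermitian' hS, Polynomial.map_prod]
    have h1 : ∀ r : ℝ, Polynomial.map Complex.ofRealHom (X - C r)
        = X - C (Complex.ofReal r) := fun r => by simp
    simp only [h1, Function.comp_apply]
    exact (Equiv.prod_comp σS fun i => X - C (Complex.ofReal (hS.eigenvalues i))).symm
  · have : (Mmat c A).map Complex.ofReal = (Mmat c A).map (Complex.ofRealHom : ℝ →+* ℂ) := rfl
    rw [this, Matrix.charpoly_map, hcpM, charpoly_hermitian' hT, Polynomial.map_prod]
    have h1 : ∀ r : ℝ, Polynomial.map Complex.ofRealHom (X - C r)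
        = X - C (Complex.ofReal r) := fun r => by simp
    simp only [h1, Function.comp_apply]
    exact (Equiv.prod_comp σT fun i => X - C (Complex.ofReal (hT.eigenvalues i))).symm
  -- interlacing
  intro i hi
  set k : Fin n := ⟨i, Nat.lt_of_succ_lt hi⟩ with hk_def
  set k1 : Fin n := ⟨i + 1, hi⟩ with hk1_def
  set v : Fin n → ℝ := fun i => 1 / s i with hv_def
  -- quadratic form relation
  have hn0 : (n : ℝ) ≠ 0 := Nat.cast_ne_zero.mpr (by omega)
  have hq : ∀ x : Fin n → ℝ,
      x ⬝ᵥ (T *ᵥ x) = x ⬝ᵥ (S *ᵥ x) + (c / n) * (∑ l, v l * x l)^2 := by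
    intro x
    have hTS : ∀ a b, T a b = S a b + (c / n) * (v a * v b) := by
      intro a b
      show (c / n + A a b) / (s a * s b) = A a b / (s a * s b) + c / n * (1 / s a * (1 / s b))
      field_simp [hn0, (hs a).ne', (hs b).ne']
      ring
    have expand : ∀ (M : Matrix (Fin n) (Fin n) ℝ),
        x ⬝ᵥ (M *ᵥ x) = ∑ a, ∑ b, x a * (M a b * x b) := by
      intro M
      simp only [dotProduct, Matrix.mulVec, dotProduct, Finset.mul_sum]
    rw [expand T, expand S]
    have hpt : ∀ a b, x a * (T a b * x b)
        = x a * (S a b * x b) + (c / n) * ((v a * x a) * (v b * x b)) := by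
      intro a b; rw [hTS a b]; ring
    simp only [hpt, Finset.sum_add_distrib]
    congr 1
    rw [sq, Finset.sum_mul_sum, Finset.mul_sum]
    refine Finset.sum_congr rfl fun a _ => ?_
    rw [Finset.mul_sum]
  -- positivity of x ⬝ᵥ x for nonzero x
  have hxx_pos : ∀ x : Fin n → ℝ, x ≠ 0 → 0 < x ⬝ᵥ x := by
    intro x hx
    have hnn : ∀ l ∈ Finset.univ, 0 ≤ x l * x l := fun l _ => mul_self_nonneg _
    rcases (Finset.sum_nonneg hnn).lt_or_eq with h | h
    · exact h
    · exfalso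
      apply hx
      funext l
      have := (Finset.sum_eq_zero_iff_of_nonneg hnn).mp h.symm l (Finset.mem_univ l)
      exact mul_self_eq_zero.mp this
  -- finrank of spans
  have span_rank : ∀ {B : Matrix (Fin n) (Fin n) ℝ} (hB : B.IsHermitian)
      (σ : Equiv.Perm (Fin n)) (t : Finset (Fin n)),
      Module.finrank ℝ (Submodule.span ℝ
        (⇑hB.eigenvectorBasis '' (σ '' ↑t))) = t.card := by
    intro B hB σ t
    have himg : σ '' ↑t = ↑(t.image σ) := by ext y; simp
    rw [himg, finrank_span_basis_image hB]
    exact Finset.card_image_of_injective t σ.injective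
  have hIci : ∀ m : Fin n, ((Finset.Ici m : Finset (Fin n)) : Set (Fin n)) = {j | m ≤ j} := by
    intro m; ext y; simp
  have hIic : ∀ m : Fin n, ((Finset.Iic m : Finset (Fin n)) : Set (Fin n)) = {j | j ≤ m} := by
    intro m; ext y; simp
  constructor
  · -- lamK k ≤ lamM k
    set U : Submodule ℝ (EuclideanSpace ℝ (Fin n)) :=
      Submodule.span ℝ (⇑hS.eigenvectorBasis '' (σS '' {j | k ≤ j})) with hU_def
    set W : Submodule ℝ (EuclideanSpace ℝ (Fin n)) :=
      Submodule.span ℝ (⇑hT.eigenvectorBasis '' (σT '' {j | j ≤ k})) with hW_def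
    have hUrank : Module.finrank ℝ U = n - i := by
      rw [hU_def, ← hIci k, span_rank hS σS (Finset.Ici k)]
      simp [Fin.card_Ici, hk_def]
    have hWrank : Module.finrank ℝ W = i + 1 := by
      rw [hW_def, ← hIic k, span_rank hT σT (Finset.Iic k)]
      simp [Fin.card_Iic, hk_def]
    obtain ⟨x, hx, hx0⟩ := exists_ne_zero_mem_inf U W (by omega)
    obtain ⟨hxU, hxW⟩ := hx
    have h1 := quad_ge hS σS (Tuple.monotone_sort _) k x hxU
    have h2 := quad_le hT σT (Tuple.monotone_sort _) k x hxW
    have h3 : (x : Fin n → ℝ) ⬝ᵥ (S *ᵥ x) ≤ (x : Fin n → ℝ) ⬝ᵥ (T *ᵥ x) := by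
      rw [hq (x : Fin n → ℝ)]
      have : 0 ≤ (c / n) * (∑ l, v l * (x : Fin n → ℝ) l)^2 :=
        mul_nonneg (div_nonneg hc.le (Nat.cast_nonneg n)) (sq_nonneg _)
      linarith
    have hpos : 0 < (x : Fin n → ℝ) ⬝ᵥ (x : Fin n → ℝ) := by
      apply hxx_pos
      intro h0
      exact hx0 (by ext l; exact congrFun h0 l)
    have := le_of_mul_le_mul_right (by
      calc hS.eigenvalues (σS k) * ((x : Fin n → ℝ) ⬝ᵥ (x : Fin n → ℝ))
          ≤ (x : Fin n → ℝ) ⬝ᵥ (S *ᵥ x) := h1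
        _ ≤ (x : Fin n → ℝ) ⬝ᵥ (T *ᵥ x) := h3
        _ ≤ hT.eigenvalues (σT k) * ((x : Fin n → ℝ) ⬝ᵥ (x : Fin n → ℝ)) := h2) hpos
    exact this
  · -- lamM k ≤ lamK k1
    set U : Submodule ℝ (EuclideanSpace ℝ (Fin n)) :=
      Submodule.span ℝ (⇑hT.eigenvectorBasis '' (σT '' {j | k ≤ j})) with hU_def
    set W0 : Submodule ℝ (EuclideanSpace ℝ (Fin n)) :=
      Submodule.span ℝ (⇑hS.eigenvectorBasis '' (σS '' {j | j ≤ k1})) with hW0_def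
    -- linear functional x ↦ ∑ l, v l * x l
    set φ : EuclideanSpace ℝ (Fin n) →ₗ[ℝ] ℝ :=
      { toFun := fun x => ∑ l, v l * (x : Fin n → ℝ) l
        map_add' := by
          intro x y
          simp [mul_add, Finset.sum_add_distrib]
        map_smul' := by
          intro r x
          simp [Finset.mul_sum]
          exact Finset.sum_congr rfl fun l _ => by ring } with hφ_def
    have hkerrank : n - 1 ≤ Module.finrank ℝ (LinearMap.ker φ) := by
      have hrn := LinearMap.finrank_range_add_finrank_ker φ
      rw [finrank_euclideanSpace, Fintype.card_fin] at hrn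
      have : Module.finrank ℝ (LinearMap.range φ) ≤ 1 := by
        have := Submodule.finrank_le (LinearMap.range φ)
        rwa [Module.finrank_self] at this
      omega
    have hUrank : Module.finrank ℝ U = n - i := by
      rw [hU_def, ← hIci k, span_rank hT σT (Finset.Ici k)]
      simp [Fin.card_Ici, hk_def]
    have hW0rank : Module.finrank ℝ W0 = i + 2 := by
      rw [hW0_def, ← hIic k1, span_rank hS σS (Finset.Iic k1)]
      simp [Fin.card_Iic, hk1_def]
    set W : Submodule ℝ (EuclideanSpace ℝ (Fin n)) := W0 ⊓ LinearMap.ker φ with hW_def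
    have hWrank : i + 1 ≤ Module.finrank ℝ W := by
      have hsum := Submodule.finrank_sup_add_finrank_inf_eq W0 (LinearMap.ker φ)
      rw [← hW_def] at hsum
      have hle : Module.finrank ℝ (W0 ⊔ LinearMap.ker φ :
          Submodule ℝ (EuclideanSpace ℝ (Fin n))) ≤ n := by
        have := Submodule.finrank_le (W0 ⊔ LinearMap.ker φ)
        rwa [finrank_euclideanSpace, Fintype.card_fin] at this
      omega
    obtain ⟨x, hx, hx0⟩ := exists_ne_zero_mem_inf U W (by omega)
    obtain ⟨hxU, hxW0, hxker⟩ := hx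
    have h1 := quad_ge hT σT (Tuple.monotone_sort _) k x hxU
    have h2 := quad_le hS σS (Tuple.monotone_sort _) k1 x hxW0
    have hker : (∑ l, v l * (x : Fin n → ℝ) l) = 0 := hxker
    have h3 : (x : Fin n → ℝ) ⬝ᵥ (T *ᵥ x) = (x : Fin n → ℝ) ⬝ᵥ (S *ᵥ x) := by
      rw [hq (x : Fin n → ℝ), hker]
      ring
    have hpos : 0 < (x : Fin n → ℝ) ⬝ᵥ (x : Fin n → ℝ) := by
      apply hxx_pos
      intro h0
      exact hx0 (by ext l; exact congrFun h0 l)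
    exact le_of_mul_le_mul_right (by
      calc hT.eigenvalues (σT k) * ((x : Fin n → ℝ) ⬝ᵥ (x : Fin n → ℝ))
          ≤ (x : Fin n → ℝ) ⬝ᵥ (T *ᵥ x) := h1
        _ = (x : Fin n → ℝ) ⬝ᵥ (S *ᵥ x) := h3
        _ ≤ hS.eigenvalues (σS k1) * ((x : Fin n → ℝ) ⬝ᵥ (x : Fin n → ℝ)) := h2) hpos
end

section
/- Fix p > 0, let k = ⌊p⌋ + 1, and for n > p set p'_n = p/(k − (k−1)p/n). Let T_1, …, T_k be independent random matrices, each distributed as the adjacency matrix of a random graph following G(n, p'_n/n), and let T = T_1 + … + T_k. Then 0 < p'_n/n < 1 (so the T_s are well defined), and the conditional distribution of T given the event {T ∈ {0,1}^{n×n}} equals the distribution of the adjacency matrix of a random graph following G(n, p/n). -/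
open MeasureTheory Filter

noncomputable instance {n : ℕ} : MeasurableSpace (Matrix (Fin n) (Fin n) ℝ) :=
  inferInstanceAs (MeasurableSpace (Fin n → Fin n → ℝ))

instance (n : ℕ) (a : ℝ) : MeasureTheory.IsFiniteMeasure (erMeasure n a) := by
  constructor
  rw [erMeasure, MeasureTheory.Measure.pi_univ]
  exact ENNReal.prod_lt_top fun i _ => MeasureTheory.measure_lt_top _ _


open scoped Classical
open ProbabilityTheory

noncomputable section AuxSec

lemma bern_apply (a : ℝ) (s : Set Bool) :
    bernoulliMeasure a s = (if true ∈ s then ENNReal.ofReal a else 0)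
      + (if false ∈ s then ENNReal.ofReal (1-a) else 0) := by
  simp [_root_.bernoulliMeasure, Measure.dirac_apply' _ (s := s) .of_discrete, Set.indicator_apply]

lemma bern_true (a : ℝ) : bernoulliMeasure a {true} = ENNReal.ofReal a := by simp [bern_apply]
lemma bern_false (a : ℝ) : bernoulliMeasure a {false} = ENNReal.ofReal (1-a) := by simp [bern_apply]

noncomputable def gfun (m : ℕ) (v : Fin (m+1) → Bool) : ℝ := ∑ s, (if v s then 1 else 0)

def S0 (m : ℕ) : Set (Fin (m+1) → Bool) := {v | gfun m v = 0 ∨ gfun m v = 1}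

noncomputable def nuk (m : ℕ) (a : ℝ) : Measure (Fin (m+1) → Bool) :=
  Measure.pi fun _ => bernoulliMeasure a

instance (m : ℕ) (a : ℝ) : IsFiniteMeasure (nuk m a) := by
  constructor
  rw [nuk, Measure.pi_univ]
  exact ENNReal.prod_lt_top fun i _ => measure_lt_top _ _

lemma nuk_singleton (m : ℕ) (a : ℝ) (v : Fin (m+1) → Bool) :
    nuk m a {v} = ∏ s, bernoulliMeasure a {v s} := by
  rw [← Set.univ_pi_singleton v, nuk, Measure.pi_pi]

lemma gfun_eq_card (m : ℕ) (v : Fin (m+1) → Bool) :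
    gfun m v = (Finset.univ.filter (fun s => v s = true)).card := by
  rw [gfun, Finset.sum_boole]

lemma Zset (m : ℕ) : {v : Fin (m+1) → Bool | gfun m v = 0} = {fun _ => false} := by
  ext v
  simp only [Set.mem_setOf_eq, gfun_eq_card, Nat.cast_eq_zero, Finset.card_eq_zero,
    Set.mem_singleton_iff, Finset.filter_eq_empty_iff, Finset.mem_univ, forall_const]
  constructor
  · intro h; funext s
    have h2 : ¬ (v s = true) := fun hs => h hs
    revert h2; cases v s <;> simp
  · intro h s hs; rw [h] at hs; simp at hs

noncomputable def delta (m : ℕ) (s : Fin (m+1)) : Fin (m+1) → Bool := fun t => decide (t = s)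

lemma Oset (m : ℕ) : {v : Fin (m+1) → Bool | gfun m v = 1} = ⋃ s, {delta m s} := by
  ext v
  simp only [Set.mem_setOf_eq, gfun_eq_card, Nat.cast_eq_one, Finset.card_eq_one,
    Set.mem_iUnion, Set.mem_singleton_iff]
  constructor
  · rintro ⟨s, hs⟩
    refine ⟨s, funext fun t => ?_⟩
    rw [delta]
    have : v t = true ↔ t ∈ Finset.univ.filter (fun s => v s = true) := by simp
    by_cases h : t = s
    · subst h; simp only [decide_true]
      rw [this, hs]; simp
    · simp only [h, decide_false]
      rw [← Bool.not_eq_true, this, hs]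
      simp [h]
  · rintro ⟨s, rfl⟩
    exact ⟨s, by ext t; simp [delta]⟩

lemma nu_Z (m : ℕ) (a : ℝ) :
    nuk m a {v | gfun m v = 0} = (ENNReal.ofReal (1-a))^(m+1) := by
  rw [Zset, nuk_singleton]
  simp [bern_false]

lemma delta_inj (m : ℕ) : Function.Injective (delta m) := by
  intro s t h
  have := congrFun h s
  simp [delta] at this
  exact this

lemma nu_delta (m : ℕ) (a : ℝ) (s : Fin (m+1)) :
    nuk m a {delta m s} = ENNReal.ofReal a * (ENNReal.ofReal (1-a))^m := by
  rw [nuk_singleton]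
  have : ∀ t, bernoulliMeasure a {delta m s t}
      = if t = s then ENNReal.ofReal a else ENNReal.ofReal (1-a) := by
    intro t; by_cases h : t = s <;> simp [delta, h, bern_true, bern_false]
  rw [Finset.prod_congr rfl (fun t _ => this t)]
  rw [← Finset.prod_erase_mul _ _ (Finset.mem_univ s)]
  rw [Finset.prod_congr rfl (fun t ht => if_neg (Finset.ne_of_mem_erase ht))]
  rw [Finset.prod_const, if_pos rfl, mul_comm]
  rw [Finset.card_erase_of_mem (Finset.mem_univ s), Finset.card_univ, Fintype.card_fin,
    Nat.add_sub_cancel]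

lemma nu_O (m : ℕ) (a : ℝ) :
    nuk m a {v | gfun m v = 1}
      = (m+1 : ℕ) * (ENNReal.ofReal a * (ENNReal.ofReal (1-a))^m) := by
  rw [Oset, measure_iUnion (fun s t hst => by simp [Set.disjoint_singleton, (delta_inj m).ne hst])
    (fun s => .of_discrete)]
  rw [tsum_fintype]
  simp only [nu_delta]
  rw [Finset.sum_const, Finset.card_univ, Fintype.card_fin, nsmul_eq_mul]

lemma S0_eq (m : ℕ) : S0 m = {v | gfun m v = 0} ∪ {v | gfun m v = 1} := rfl

lemma ZO_disj (m : ℕ) :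
    Disjoint {v : Fin (m+1) → Bool | gfun m v = 0} {v | gfun m v = 1} := by
  rw [Set.disjoint_left]
  rintro v h0 h1
  simp only [Set.mem_setOf_eq] at h0 h1
  rw [h0] at h1; norm_num at h1

/-- The heart: the per-edge conditional distribution. -/
lemma edge_lemma (m : ℕ) (a q : ℝ) (ha : 0 < a) (ha1 : a < 1)
    (hkey : ((m:ℝ)+1)*a = q*(1+m*a)) :
    Measure.map (gfun m) (ProbabilityTheory.cond (nuk m a) (S0 m))
      = Measure.map (fun x : Bool => if x then (1:ℝ) else 0) (bernoulliMeasure q) := by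
  set A := ENNReal.ofReal a with hA
  set B := ENNReal.ofReal (1-a) with hB
  set T : ℝ := (1-a)^(m+1) + ((m:ℝ)+1) * (a * (1-a)^m) with hT
  have h1a : (0:ℝ) < 1 - a := by linarith
  have hTpos : 0 < T := by positivity
  have hZr : nuk m a {v | gfun m v = 0} = ENNReal.ofReal ((1-a)^(m+1)) := by
    rw [nu_Z, ENNReal.ofReal_pow h1a.le]
  have hOr : nuk m a {v | gfun m v = 1} = ENNReal.ofReal (((m:ℝ)+1) * (a * (1-a)^m)) := by
    rw [nu_O, show ((m:ℝ)+1) = ((m+1:ℕ):ℝ) by push_cast; ring,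
      ENNReal.ofReal_mul (by positivity), ENNReal.ofReal_natCast,
      ENNReal.ofReal_mul ha.le, ENNReal.ofReal_pow h1a.le]
  have hc : nuk m a (S0 m) = ENNReal.ofReal T := by
    rw [S0_eq, measure_union (ZO_disj m) .of_discrete, hZr, hOr,
      ← ENNReal.ofReal_add (by positivity) (by positivity)]
  have hq0 : (nuk m a (S0 m))⁻¹ * nuk m a {v | gfun m v = 0} = ENNReal.ofReal (1-q) := by
    rw [hc, hZr, ← ENNReal.ofReal_inv_of_pos hTpos,
      ← ENNReal.ofReal_mul (by positivity)]
    congr 1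
    rw [inv_mul_eq_div, div_eq_iff hTpos.ne']
    linear_combination (-(1-a)^m) * hkey
  have hq1 : (nuk m a (S0 m))⁻¹ * nuk m a {v | gfun m v = 1} = ENNReal.ofReal q := by
    rw [hc, hOr, ← ENNReal.ofReal_inv_of_pos hTpos,
      ← ENNReal.ofReal_mul (by positivity)]
    congr 1
    rw [inv_mul_eq_div, div_eq_iff hTpos.ne']
    linear_combination ((1-a)^m) * hkey
  ext s hs
  rw [Measure.map_apply .of_discrete hs, Measure.map_apply .of_discrete hs,
    ProbabilityTheory.cond_apply .of_discrete]
  have hsplit : S0 m ∩ (gfun m)⁻¹' s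
      = {v | gfun m v = 0 ∧ (0:ℝ) ∈ s} ∪ {v | gfun m v = 1 ∧ (1:ℝ) ∈ s} := by
    ext v
    simp only [S0_eq, Set.mem_inter_iff, Set.mem_union, Set.mem_setOf_eq, Set.mem_preimage]
    constructor
    · rintro ⟨h | h, hmem⟩
      · exact Or.inl ⟨h, h ▸ hmem⟩
      · exact Or.inr ⟨h, h ▸ hmem⟩
    · rintro (⟨h, hm⟩ | ⟨h, hm⟩)
      · exact ⟨Or.inl h, by rw [h]; exact hm⟩
      · exact ⟨Or.inr h, by rw [h]; exact hm⟩
  rw [hsplit, measure_union ((ZO_disj m).mono (fun v hv => hv.1) (fun v hv => hv.1))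
    .of_discrete, bern_apply]
  have hpre1 : (true ∈ (fun x : Bool => if x then (1:ℝ) else 0)⁻¹' s) = ((1:ℝ) ∈ s) := by simp
  have hpre0 : (false ∈ (fun x : Bool => if x then (1:ℝ) else 0)⁻¹' s) = ((0:ℝ) ∈ s) := by simp
  rw [hpre1, hpre0]
  by_cases h0 : (0:ℝ) ∈ s <;> by_cases h1 : (1:ℝ) ∈ s <;>
    simp only [h0, h1, if_true, if_false, and_true, and_false, Set.setOf_false,
      measure_empty, add_zero, zero_add, Set.setOf_and, Set.setOf_mem_eq]
  · rw [mul_add, hq0, hq1, add_comm]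
  · exact hq0
  · exact hq1
  · simp

section PiLevel
variable {ι : Type*} [Fintype ι]

lemma swap_map (m : ℕ) (a : ℝ) :
    Measure.map (fun (ωs : Fin (m+1) → ι → Bool) (e : ι) (s : Fin (m+1)) => ωs s e)
      (Measure.pi fun _ : Fin (m+1) => Measure.pi fun _ : ι => bernoulliMeasure a)
    = Measure.pi fun _ : ι => nuk m a := by
  apply Measure.ext_of_singleton
  intro η
  rw [Measure.map_apply .of_discrete .of_discrete]
  have hpre : (fun (ωs : Fin (m+1) → ι → Bool) (e : ι) (s : Fin (m+1)) => ωs s e) ⁻¹' {η}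
      = {fun s e => η e s} := by
    ext ωs
    simp only [Set.mem_preimage, Set.mem_singleton_iff, funext_iff]
    exact ⟨fun h s e => h e s, fun h e s => h s e⟩
  rw [hpre, ← Set.univ_pi_singleton, Measure.pi_pi, ← Set.univ_pi_singleton η, Measure.pi_pi]
  have : ∀ s : Fin (m+1), (Measure.pi fun _ : ι => bernoulliMeasure a) {fun e => η e s}
      = ∏ e, bernoulliMeasure a {η e s} := by
    intro s
    rw [← Set.univ_pi_singleton, Measure.pi_pi]
  rw [Finset.prod_congr rfl fun s _ => this s]
  rw [Finset.prod_congr rfl fun (e : ι) _ => nuk_singleton m a (η e)]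
  exact Finset.prod_comm

lemma cond_pi (m : ℕ) (a : ℝ) (ha : 0 < a) (ha1 : a < 1) :
    ProbabilityTheory.cond (Measure.pi fun _ : ι => nuk m a) (Set.univ.pi fun _ => S0 m)
    = Measure.pi fun _ : ι => ProbabilityTheory.cond (nuk m a) (S0 m) := by
  have h1a : (0:ℝ) < 1 - a := by linarith
  have hc0 : nuk m a (S0 m) ≠ 0 := by
    intro h
    have hle : nuk m a {v | gfun m v = 0} ≤ nuk m a (S0 m) :=
      measure_mono (by rw [S0_eq]; exact Set.subset_union_left)
    rw [h, nonpos_iff_eq_zero, nu_Z] at hle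
    simp [ENNReal.ofReal_eq_zero, not_lt.mpr h1a.le] at hle
    linarith
  apply Measure.ext_of_singleton
  intro η
  rw [ProbabilityTheory.cond_apply .of_discrete, ← Set.univ_pi_singleton, Measure.pi_pi,
    ← Set.pi_inter_distrib, Measure.pi_pi, Measure.pi_pi]
  have : ∀ e : ι, ProbabilityTheory.cond (nuk m a) (S0 m) {η e}
      = (nuk m a (S0 m))⁻¹ * nuk m a (S0 m ∩ {η e}) :=
    fun e => ProbabilityTheory.cond_apply .of_discrete _ _
  rw [Finset.prod_congr rfl fun e _ => this e, Finset.prod_mul_distrib, Finset.prod_const,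
    Finset.prod_const, ENNReal.inv_pow]

end PiLevel

lemma map_cond {α β : Type*} [MeasurableSpace α] [MeasurableSpace β] (μ : Measure α)
    {f : α → β} (hf : Measurable f) {s : Set β} (hs : MeasurableSet s) :
    Measure.map f (ProbabilityTheory.cond μ (f ⁻¹' s))
      = ProbabilityTheory.cond (Measure.map f μ) s := by
  rw [ProbabilityTheory.cond, ProbabilityTheory.cond, Measure.map_smul,
    Measure.restrict_map hf hs, Measure.map_apply hf hs]


lemma S0_ne_zero (m : ℕ) (a : ℝ) (ha1 : a < 1) : nuk m a (S0 m) ≠ 0 := by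
  have h1a : (0:ℝ) < 1 - a := by linarith
  intro h
  have hle : nuk m a {v | gfun m v = 0} ≤ nuk m a (S0 m) :=
    measure_mono (by rw [S0_eq]; exact Set.subset_union_left)
  rw [h, nonpos_iff_eq_zero, nu_Z] at hle
  simp [ENNReal.ofReal_eq_zero, not_lt.mpr h1a.le] at hle
  linarith

def Phi (n : ℕ) (x : {e : Fin n × Fin n // e.1 < e.2} → ℝ) : Matrix (Fin n) (Fin n) ℝ :=
  Matrix.of fun i j =>
    if h : i < j then x ⟨(i, j), h⟩ else if h' : j < i then x ⟨(j, i), h'⟩ else 0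

lemma measurable_Phi (n : ℕ) : Measurable (Phi n) := by
  apply measurable_pi_lambda
  intro i
  apply measurable_pi_lambda
  intro j
  simp only [Phi, Matrix.of_apply]
  split_ifs with h h'
  · exact measurable_pi_apply _
  · exact measurable_pi_apply _
  · exact measurable_const

lemma sum_adj (m n : ℕ) (ωs : Fin (m+1) → EdgeSpace n) :
    (∑ s, adjMatrix (ωs s)) = Phi n (fun e => gfun m (fun s => ωs s e)) := by
  ext i j
  rw [Matrix.sum_apply]
  by_cases h : i < j
  · simp only [adjMatrix, Phi, Matrix.of_apply, dif_pos h]; rfl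
  · by_cases h' : j < i
    · simp only [adjMatrix, Phi, Matrix.of_apply, dif_neg h, dif_pos h']; rfl
    · simp only [adjMatrix, Phi, Matrix.of_apply, dif_neg h, dif_neg h']
      simp

lemma pi_map {ι : Type*} [Fintype ι] {α β : Type*} [MeasurableSpace α] [MeasurableSpace β]
    (μ : Measure α) [IsFiniteMeasure μ] (f : α → β) (hf : Measurable f) :
    Measure.map (fun (η : ι → α) (e : ι) => f (η e)) (Measure.pi fun _ => μ)
      = Measure.pi fun _ => Measure.map f μ := by
  haveI : IsFiniteMeasure (Measure.map f μ) :=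
    ⟨by rw [Measure.map_apply hf .univ]; exact measure_lt_top μ _⟩
  exact (measurePreserving_pi (fun _ : ι => μ) (fun _ : ι => Measure.map f μ)
    (fun _ => ⟨hf, rfl⟩)).map_eq

end AuxSec


/-- with k = ⌊p⌋+1 and p'_n = p/(k − (k−1)p/n), the sum
T = T_1 + ⋯ + T_k of k i.i.d. adjacency matrices of G(n, p'_n/n) graphs,
conditioned to have 0–1 entries, is distributed as the adjacency matrix of a
G(n, p/n) graph; moreover 0 < p'_n/n < 1 so everything is well defined. -/
theorem sum_of_adjacency_matrices_conditional_distribution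
    (p : ℝ) (hp : 0 < p) (n : ℕ) (hn : p < n) :
    0 < (p / (((⌊p⌋₊ : ℝ) + 1) - (⌊p⌋₊ : ℝ) * p / n)) / n ∧
    (p / (((⌊p⌋₊ : ℝ) + 1) - (⌊p⌋₊ : ℝ) * p / n)) / n < 1 ∧
    MeasureTheory.Measure.map
      (fun ωs : Fin (⌊p⌋₊ + 1) → EdgeSpace n => ∑ s, adjMatrix (ωs s))
      (ProbabilityTheory.cond
        (MeasureTheory.Measure.pi fun _ : Fin (⌊p⌋₊ + 1) =>
          erMeasure n ((p / (((⌊p⌋₊ : ℝ) + 1) - (⌊p⌋₊ : ℝ) * p / n)) / n))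
        {ωs | ∀ i j : Fin n,
          (∑ s, adjMatrix (ωs s)) i j = 0 ∨ (∑ s, adjMatrix (ωs s)) i j = 1})
      = MeasureTheory.Measure.map adjMatrix (erMeasure n (p / n)) := by
  have hn0 : (0:ℝ) < n := lt_trans hp hn
  set m := ⌊p⌋₊ with hm
  set q : ℝ := p / n with hq2
  set d : ℝ := ((m:ℝ) + 1) - (m:ℝ) * p / n with hd2
  set a : ℝ := p / d / n with ha2
  have hpn : p / n < 1 := (div_lt_one hn0).2 hn
  have hd1 : (1:ℝ) ≤ d := by
    rw [hd2]
    have h1 : (m:ℝ) * p / n ≤ m := by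
      rw [mul_div_assoc]
      exact mul_le_of_le_one_right (Nat.cast_nonneg m) hpn.le
    linarith
  have hd0 : (0:ℝ) < d := lt_of_lt_of_le one_pos hd1
  have ha' : 0 < a := by rw [ha2]; positivity
  have ha1' : a < 1 := by
    rw [ha2, div_div, div_lt_one (by positivity)]
    rw [hd2]
    have hexp : (((m:ℝ) + 1) - (m:ℝ) * p / n) * n = ((m:ℝ) + 1) * n - (m:ℝ) * p := by
      field_simp
    rw [hexp]
    nlinarith [Nat.cast_nonneg (α := ℝ) m]
  have hkey : ((m:ℝ) + 1) * a = q * (1 + (m:ℝ) * a) := by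
    have hdne : ((m:ℝ) + 1) - (m:ℝ) * p / n ≠ 0 := by rw [← hd2]; exact hd0.ne'
    have hE : ((m:ℝ) + 1) * n - (m:ℝ) * p ≠ 0 := by
      have hEe : ((m:ℝ) + 1) * n - (m:ℝ) * p = d * n := by
        rw [hd2]; field_simp
      rw [hEe]; positivity
    rw [ha2, hq2, hd2]
    field_simp
    ring
  refine ⟨ha', ha1', ?_⟩
  haveI hprob : IsProbabilityMeasure (ProbabilityTheory.cond (nuk m a) (S0 m)) :=
    ProbabilityTheory.cond_isProbabilityMeasure (S0_ne_zero m a ha1')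
  have hSev : {ωs : Fin (m+1) → EdgeSpace n | ∀ i j : Fin n,
        (∑ s, adjMatrix (ωs s)) i j = 0 ∨ (∑ s, adjMatrix (ωs s)) i j = 1}
      = (fun (ωs : Fin (m+1) → EdgeSpace n) (e : {e : Fin n × Fin n // e.1 < e.2})
          (s : Fin (m+1)) => ωs s e) ⁻¹' (Set.univ.pi fun _ => S0 m) := by
    ext ωs
    simp only [Set.mem_setOf_eq, Set.mem_preimage, Set.mem_univ_pi, sum_adj]
    constructor
    · intro h e
      have h2 := h e.1.1 e.1.2
      rw [show (Phi n (fun e => gfun m fun s => ωs s e) e.1.1 e.1.2)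
          = gfun m (fun s => ωs s e) from by
        simp only [Phi, Matrix.of_apply, dif_pos e.2]] at h2
      exact h2
    · intro h i j
      rcases lt_trichotomy i j with hij | hij | hij
      · rw [show (Phi n (fun e => gfun m fun s => ωs s e) i j)
            = gfun m (fun s => ωs s ⟨(i,j), hij⟩) from by
          simp only [Phi, Matrix.of_apply, dif_pos hij]]
        exact h _
      · subst hij
        rw [show (Phi n (fun e => gfun m fun s => ωs s e) i i) = 0 from by
          simp [Phi, lt_irrefl]]
        exact Or.inl rfl
      · rw [show (Phi n (fun e => gfun m fun s => ωs s e) i j)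
            = gfun m (fun s => ωs s ⟨(j,i), hij⟩) from by
          simp only [Phi, Matrix.of_apply, dif_neg (not_lt.mpr hij.le), dif_pos hij]]
        exact h _
  rw [show (fun ωs : Fin (m+1) → EdgeSpace n => ∑ s, adjMatrix (ωs s))
      = (Phi n) ∘ ((fun (η : {e : Fin n × Fin n // e.1 < e.2} → Fin (m+1) → Bool) e =>
          gfun m (η e)) ∘ (fun (ωs : Fin (m+1) → EdgeSpace n) e s => ωs s e)) from
    funext fun ωs => sum_adj m n ωs]
  rw [hSev]
  rw [← Measure.map_map (measurable_Phi n) Measurable.of_discrete]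
  rw [← Measure.map_map (Measurable.of_discrete
      (f := fun (η : {e : Fin n × Fin n // e.1 < e.2} → Fin (m+1) → Bool) e => gfun m (η e)))
    Measurable.of_discrete]
  rw [map_cond _ Measurable.of_discrete (MeasurableSet.univ_pi fun _ => .of_discrete)]
  rw [show (Measure.pi fun _ : Fin (m+1) => erMeasure n a)
      = Measure.pi fun _ : Fin (m+1) =>
          Measure.pi fun _ : {e : Fin n × Fin n // e.1 < e.2} => bernoulliMeasure a from rfl]
  rw [swap_map m a]
  rw [cond_pi m a ha' ha1']
  rw [pi_map (ProbabilityTheory.cond (nuk m a) (S0 m)) (gfun m) Measurable.of_discrete]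
  rw [edge_lemma m a q ha' ha1' hkey]
  rw [show (adjMatrix : EdgeSpace n → Matrix (Fin n) (Fin n) ℝ)
      = (Phi n) ∘ (fun (ω : EdgeSpace n) e => if ω e then (1:ℝ) else 0) from rfl]
  rw [← Measure.map_map (measurable_Phi n) Measurable.of_discrete]
  rw [show erMeasure n q
      = Measure.pi fun _ : {e : Fin n × Fin n // e.1 < e.2} => bernoulliMeasure q from rfl]
  rw [pi_map (bernoulliMeasure q) (fun x : Bool => if x then (1:ℝ) else 0)
    Measurable.of_discrete]
end
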